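/- arXiv:1902.04578 — 6 statements merged into one kernel-verified Lean document; each statement's English description precedes it below -/
import Mathlib

section
/- Let p ≥ 2 and p/2 ≤ r ≤ p. The map α ↦ λ_α(p,r) is nondecreasing and Lipschitz continuous on ℝ; quantitatively, for every α ∈ ℝ and every ε > 0 one has λ_α(p,r) ≤ λ_{α+ε}(p,r) ≤ λ_α(p,r) + 2^{(p−r)/r} ε. -/
open Set MeasureTheory intervalIntegral Real

noncomputable section

/-- `MemW0 p u g` : `u ∈ W_0^{1,p}(-1,1)` with (weak) derivative `g`, i.e. `u` is the
absolutely continuous primitive of `g ∈ L^p(-1,1)` vanishing at both endpoints. -/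
def MemW0 (p : ℝ) (u g : ℝ → ℝ) : Prop :=
  IntervalIntegrable g volume (-1) 1 ∧
  IntervalIntegrable (fun x => |g x| ^ p) volume (-1) 1 ∧
  (∀ x ∈ Icc (-1 : ℝ) 1, u x = ∫ t in (-1 : ℝ)..x, g t) ∧
  u 1 = 0

/-- The Rayleigh-type quotient `Q_α[u]` (here `g` stands for `u'`). -/
def QRay (p r α : ℝ) (u g : ℝ → ℝ) : ℝ :=
  ((∫ x in (-1 : ℝ)..1, |g x| ^ p) +
      α * |∫ x in (-1 : ℝ)..1, |u x| ^ (r - 1) * u x| ^ (p / r)) /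
    ∫ x in (-1 : ℝ)..1, |u x| ^ p

/-- `u ≢ 0` on `[-1,1]`. -/
def Nontriv (u : ℝ → ℝ) : Prop := ∃ x ∈ Icc (-1 : ℝ) 1, u x ≠ 0

/-- `λ_α(p,r)`, the infimum of the quotient `Q_α`. -/
def lam (p r α : ℝ) : ℝ :=
  sInf {v | ∃ u g, MemW0 p u g ∧ Nontriv u ∧ v = QRay p r α u g}

/-- `π_p`. -/
def pip (p : ℝ) : ℝ :=
  2 * ∫ t in (0 : ℝ)..(p - 1) ^ (1 / p), (1 - t ^ p / (p - 1)) ^ (-(1 / p))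

lemma core (p r : ℝ) (hp : 2 ≤ p) (hr1 : p / 2 ≤ r) (hr2 : r ≤ p) (u g : ℝ → ℝ)
    (hm : MemW0 p u g) (hnt : Nontriv u) :
    0 < (∫ x in (-1:ℝ)..1, |u x| ^ p) ∧
    |∫ x in (-1:ℝ)..1, |u x| ^ (r - 1) * u x| ^ (p / r) ≤
      (2:ℝ) ^ ((p - r) / r) * ∫ x in (-1:ℝ)..1, |u x| ^ p := by
  have hp0 : (0:ℝ) < p := by linarith
  have hr0 : (0:ℝ) < r := by linarith
  have hr1' : (1:ℝ) ≤ r := by linarith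
  have h11 : uIcc (-1:ℝ) 1 = Icc (-1:ℝ) 1 := uIcc_of_le (by norm_num)
  -- continuity of u on Icc
  have hF : ContinuousOn (fun b => ∫ t in (-1:ℝ)..b, g t) (Icc (-1:ℝ) 1) := by
    have := intervalIntegral.continuousOn_primitive_interval' hm.1
      (a := -1) (by rw [h11]; exact ⟨le_refl _, by norm_num⟩)
    rwa [h11] at this
  have hcu : ContinuousOn u (Icc (-1:ℝ) 1) :=
    hF.congr (fun x hx => hm.2.2.1 x hx)
  have habs : ContinuousOn (fun x => |u x|) (Icc (-1:ℝ) 1) := hcu.abs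
  have hup : ContinuousOn (fun x => |u x| ^ p) (Icc (-1:ℝ) 1) :=
    habs.rpow_const (fun x _ => Or.inr hp0.le)
  have hur : ContinuousOn (fun x => |u x| ^ r) (Icc (-1:ℝ) 1) :=
    habs.rpow_const (fun x _ => Or.inr hr0.le)
  have huru : ContinuousOn (fun x => |u x| ^ (r-1) * u x) (Icc (-1:ℝ) 1) :=
    (habs.rpow_const (fun x _ => Or.inr (by linarith))).mul hcu
  have hIup : IntervalIntegrable (fun x => |u x| ^ p) volume (-1) 1 :=
    (h11 ▸ hup).intervalIntegrable
  have hIur : IntervalIntegrable (fun x => |u x| ^ r) volume (-1) 1 :=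
    (h11 ▸ hur).intervalIntegrable
  have hIuru : IntervalIntegrable (fun x => |u x| ^ (r-1) * u x) volume (-1) 1 :=
    (h11 ▸ huru).intervalIntegrable
  set D := ∫ x in (-1:ℝ)..1, |u x| ^ p with hDdef
  set A := ∫ x in (-1:ℝ)..1, |u x| ^ r with hAdef
  set I := ∫ x in (-1:ℝ)..1, |u x| ^ (r-1) * u x with hIdef
  have hD : 0 < D := by
    obtain ⟨x0, hx0, hx0ne⟩ := hnt
    exact intervalIntegral.integral_pos (by norm_num) hup
      (fun x _ => Real.rpow_nonneg (abs_nonneg _) p)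
      ⟨x0, hx0, Real.rpow_pos_of_pos (abs_pos.2 hx0ne) p⟩
  -- |I| ≤ A
  have habspt : ∀ a : ℝ, abs (|a| ^ (r-1) * a) = |a| ^ r := by
    intro a
    rcases eq_or_ne a 0 with h | h
    · simp [h, Real.zero_rpow hr0.ne']
    · rw [abs_mul, abs_of_nonneg (Real.rpow_nonneg (abs_nonneg a) _)]
      rw [show r = r - 1 + 1 by ring, Real.rpow_add_one (abs_ne_zero.2 h)]
      ring_nf
  have hIA : |I| ≤ A := by
    calc |I| ≤ ∫ x in (-1:ℝ)..1, abs (|u x| ^ (r-1) * u x) :=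
          intervalIntegral.abs_integral_le_integral_abs (by norm_num)
      _ = A := intervalIntegral.integral_congr (fun x _ => habspt (u x))
  have hA0 : 0 ≤ A := (abs_nonneg I).trans hIA
  -- Hölder via Young
  set θ := r / p with hθdef
  have hθ0 : 0 ≤ θ := by positivity
  have hθ1 : 0 ≤ 1 - θ := by
    have : θ ≤ 1 := (div_le_one hp0).2 hr2
    linarith
  set K := D ^ θ * (2:ℝ) ^ (1 - θ) with hKdef
  have hK : 0 < K := mul_pos (Real.rpow_pos_of_pos hD _) (Real.rpow_pos_of_pos two_pos _)
  have hpt : ∀ x ∈ Icc (-1:ℝ) 1, |u x| ^ r / K ≤ (θ / D) * |u x| ^ p + (1 - θ) / 2 := by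
    intro x _
    have hyoung := Real.geom_mean_le_arith_mean2_weighted hθ0 hθ1
      (by positivity : (0:ℝ) ≤ |u x| ^ p / D) (by norm_num : (0:ℝ) ≤ (1:ℝ)/2)
      (by ring)
    have e1 : (|u x| ^ p / D) ^ θ = |u x| ^ r / D ^ θ := by
      rw [Real.div_rpow (Real.rpow_nonneg (abs_nonneg _) _) hD.le,
        ← Real.rpow_mul (abs_nonneg _)]
      congr 2
      rw [hθdef]; field_simp
    have e2 : ((1:ℝ)/2) ^ (1 - θ) = 1 / (2:ℝ) ^ (1 - θ) := by
      rw [Real.div_rpow zero_le_one (by norm_num), Real.one_rpow]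
    rw [e1, e2] at hyoung
    calc |u x| ^ r / K = |u x| ^ r / D ^ θ * (1 / (2:ℝ) ^ (1 - θ)) := by
          rw [div_mul_div_comm, mul_one, hKdef]
      _ ≤ θ * (|u x| ^ p / D) + (1 - θ) * (1/2) := hyoung
      _ = (θ / D) * |u x| ^ p + (1 - θ) / 2 := by ring
  have hAK : A ≤ K := by
    have hmono := intervalIntegral.integral_mono_on (by norm_num : (-1:ℝ) ≤ 1)
      (hIur.div_const K)
      ((hIup.const_mul (θ / D)).add (intervalIntegrable_const))
      hpt
    rw [intervalIntegral.integral_div] at hmono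
    rw [intervalIntegral.integral_add (hIup.const_mul (θ / D)) intervalIntegrable_const,
      intervalIntegral.integral_const_mul, intervalIntegral.integral_const] at hmono
    have hval : θ / D * D + ((1:ℝ) - -1) • ((1 - θ) / 2) = 1 := by
      rw [smul_eq_mul]
      field_simp
      ring
    rw [← hAdef, ← hDdef, hval] at hmono
    exact (div_le_one hK).1 hmono
  refine ⟨hD, ?_⟩
  have h1 : |I| ^ (p / r) ≤ K ^ (p / r) :=
    Real.rpow_le_rpow (abs_nonneg I) (hIA.trans hAK) (by positivity)
  have h2 : K ^ (p / r) = (2:ℝ) ^ ((p - r) / r) * D := by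
    rw [hKdef, Real.mul_rpow (Real.rpow_nonneg hD.le _) (Real.rpow_nonneg (by norm_num) _),
      ← Real.rpow_mul hD.le, ← Real.rpow_mul (by norm_num : (0:ℝ) ≤ 2)]
    have e1 : θ * (p / r) = 1 := by rw [hθdef]; field_simp
    have e2 : (1 - θ) * (p / r) = (p - r) / r := by
      rw [hθdef]; field_simp
    rw [e1, e2, Real.rpow_one, mul_comm]
  linarith [h1, h2 ▸ h1]

lemma exmem (p : ℝ) (hp : (0:ℝ) ≤ p) :
    MemW0 p (fun x => (1 - x ^ 2) / 2) (fun x => -x) := by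
  refine ⟨?_, ?_, ?_, by norm_num⟩
  · exact (continuous_id.neg).intervalIntegrable _ _
  · exact ((continuous_abs.comp continuous_neg).rpow_const
      (fun x => Or.inr hp)).intervalIntegrable _ _
  · intro x _
    rw [intervalIntegral.integral_neg, integral_id]
    ring


/-- `α ↦ λ_α(p,r)` is nondecreasing and Lipschitz, quantitatively. -/
theorem lam_monotone_lipschitz (p r : ℝ) (hp : 2 ≤ p) (hr1 : p / 2 ≤ r) (hr2 : r ≤ p) :
    Monotone (fun α => lam p r α) ∧
    LipschitzWith (Real.toNNReal ((2 : ℝ) ^ ((p - r) / r))) (fun α => lam p r α) ∧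
    ∀ α ε : ℝ, 0 < ε →
      lam p r α ≤ lam p r (α + ε) ∧
      lam p r (α + ε) ≤ lam p r α + (2 : ℝ) ^ ((p - r) / r) * ε := by
  have hp0 : (0:ℝ) < p := by linarith
  set C : ℝ := (2:ℝ) ^ ((p - r) / r) with hCdef
  have hC : 0 < C := Real.rpow_pos_of_pos two_pos _
  set S : ℝ → Set ℝ :=
    fun α => {v | ∃ u g, MemW0 p u g ∧ Nontriv u ∧ v = QRay p r α u g} with hSdef
  have hlam : ∀ α, lam p r α = sInf (S α) := fun _ => rfl
  have hm0 : MemW0 p (fun x => (1 - x ^ 2) / 2) (fun x => -x) := exmem p (by linarith)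
  have hn0 : Nontriv (fun x => (1 - x ^ 2) / 2) := ⟨0, by norm_num, by norm_num⟩
  have hne : ∀ α, (S α).Nonempty := fun α => ⟨_, _, _, hm0, hn0, rfl⟩
  have key : ∀ α u g, MemW0 p u g → Nontriv u →
      (∀ ε, 0 ≤ ε → QRay p r α u g ≤ QRay p r (α + ε) u g ∧
        QRay p r (α + ε) u g ≤ QRay p r α u g + C * ε) ∧
      -(|α| * C) ≤ QRay p r α u g := by
    intro α u g hm hn
    obtain ⟨hD, hTC⟩ := core p r hp hr1 hr2 u g hm hn
    rw [← hCdef] at hTC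
    set D := ∫ x in (-1:ℝ)..1, |u x| ^ p with hDdef
    set T := |∫ x in (-1:ℝ)..1, |u x| ^ (r - 1) * u x| ^ (p / r) with hTdef
    set G := ∫ x in (-1:ℝ)..1, |g x| ^ p with hGdef
    have hT0 : 0 ≤ T := Real.rpow_nonneg (abs_nonneg _) _
    have hG0 : 0 ≤ G := intervalIntegral.integral_nonneg (by norm_num)
      (fun x _ => Real.rpow_nonneg (abs_nonneg _) _)
    have hQ : ∀ β, QRay p r β u g = (G + β * T) / D := fun β => rfl
    constructor
    · intro ε hε
      rw [hQ, hQ]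
      constructor
      · rw [div_le_div_iff₀ hD hD]
        nlinarith [mul_nonneg (mul_nonneg hε hT0) hD.le]
      · rw [div_le_iff₀ hD]
        have hcancel : ((G + α * T) / D + C * ε) * D = G + α * T + C * ε * D := by
          field_simp
        rw [hcancel]
        nlinarith [mul_le_mul_of_nonneg_left hTC hε]
    · rw [hQ]
      have hTD : T / D ≤ C := (div_le_iff₀ hD).2 (by linarith)
      have h1 : -(|α| * C) ≤ α * (T / D) := by
        have habs : |α * (T / D)| ≤ |α| * C := by
          rw [abs_mul, abs_of_nonneg (div_nonneg hT0 hD.le)]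
          exact mul_le_mul_of_nonneg_left hTD (abs_nonneg α)
        linarith [neg_abs_le (α * (T / D))]
      have h2 : α * T / D ≤ (G + α * T) / D := by
        rw [div_le_div_iff₀ hD hD]
        nlinarith [mul_nonneg hG0 hD.le]
      have e : α * (T / D) = α * T / D := (mul_div_assoc α T D).symm
      linarith
  have hbdd : ∀ β, BddBelow (S β) := by
    intro β
    refine ⟨-(|β| * C), ?_⟩
    rintro v ⟨u, g, hm, hn, rfl⟩
    exact (key β u g hm hn).2
  have mono2 : ∀ α ε, 0 ≤ ε →
      lam p r α ≤ lam p r (α + ε) ∧ lam p r (α + ε) ≤ lam p r α + C * ε := by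
    intro α ε hε
    constructor
    · rw [hlam, hlam]
      apply le_csInf (hne _)
      rintro v ⟨u, g, hm, hn, rfl⟩
      exact le_trans (csInf_le (hbdd α) ⟨u, g, hm, hn, rfl⟩)
        ((key α u g hm hn).1 ε hε).1
    · have hstep : ∀ v ∈ S α, sInf (S (α + ε)) - C * ε ≤ v := by
        rintro v ⟨u, g, hm, hn, rfl⟩
        have h1 := ((key α u g hm hn).1 ε hε).2
        have h2 : sInf (S (α + ε)) ≤ QRay p r (α + ε) u g :=
          csInf_le (hbdd _) ⟨u, g, hm, hn, rfl⟩
        linarith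
      have := le_csInf (hne α) hstep
      rw [hlam, hlam]
      linarith
  refine ⟨?_, ?_, ?_⟩
  · intro a b hab
    have h := (mono2 a (b - a) (by linarith)).1
    rw [show a + (b - a) = b by ring] at h
    exact h
  · apply LipschitzWith.of_dist_le_mul
    intro x y
    have hCco : ((Real.toNNReal C : NNReal) : ℝ) = C := Real.coe_toNNReal _ hC.le
    simp only [Real.dist_eq, hCco]
    rcases le_total x y with h | h
    · have h1 := (mono2 x (y - x) (by linarith)).1
      have h2 := (mono2 x (y - x) (by linarith)).2
      rw [show x + (y - x) = y by ring] at h1 h2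
      have e1 : |lam p r x - lam p r y| = lam p r y - lam p r x := by
        rw [abs_sub_comm, abs_of_nonneg (by linarith)]
      have e2 : |x - y| = y - x := by
        rw [abs_sub_comm, abs_of_nonneg (by linarith)]
      rw [e1, e2]
      nlinarith
    · have h1 := (mono2 y (x - y) (by linarith)).1
      have h2 := (mono2 y (x - y) (by linarith)).2
      rw [show y + (x - y) = x by ring] at h1 h2
      have e1 : |lam p r x - lam p r y| = lam p r x - lam p r y := by
        rw [abs_of_nonneg (by linarith)]
      have e2 : |x - y| = x - y := by
        rw [abs_of_nonneg (by linarith)]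
      rw [e1, e2]
      nlinarith
  · intro α ε hε
    exact mono2 α ε hε.le
end
end

section
/- Let p ≥ 2 and p/2 ≤ r ≤ p. If α ≤ 0, then every minimizer of λ_α(p,r) does not change sign in (−1,1) (it is either nonnegative or nonpositive on (−1,1)). Moreover λ_α(p,r) → −∞ as α → −∞. -/
open Set MeasureTheory intervalIntegral Real

noncomputable section

section Helpers

lemma abs_rpow_mul_self {r : ℝ} (hr : 1 ≤ r) (a : ℝ) : abs (|a| ^ (r - 1) * a) = |a| ^ r := by
  rcases eq_or_ne a 0 with h | h
  · simp [h, Real.zero_rpow (by linarith : r ≠ 0)]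
  · have ha : 0 < |a| := abs_pos.2 h
    rw [abs_mul, abs_of_nonneg (Real.rpow_nonneg (abs_nonneg a) _)]
    rw [show r = (r - 1) + 1 by ring, Real.rpow_add ha, Real.rpow_one]
    ring_nf

lemma MemW0.contOn {p : ℝ} {u g : ℝ → ℝ} (h : MemW0 p u g) :
    ContinuousOn u (Icc (-1 : ℝ) 1) := by
  have h1 : ContinuousOn (fun x => ∫ t in (-1 : ℝ)..x, g t) (Icc (-1 : ℝ) 1) := by
    have := intervalIntegral.continuousOn_primitive_interval' (μ := volume) (f := g)
      (b₁ := (-1:ℝ)) (b₂ := 1) h.1 left_mem_uIcc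
    simpa [uIcc_of_le (by norm_num : (-1:ℝ) ≤ 1)] using this
  exact h1.congr h.2.2.1

lemma contOn_abs_rpow {u : ℝ → ℝ} (h : ContinuousOn u (Icc (-1:ℝ) 1)) {q : ℝ} (hq : 0 ≤ q) :
    ContinuousOn (fun x => |u x| ^ q) (Icc (-1:ℝ) 1) :=
  h.abs.rpow_const (fun x _ => Or.inr hq)

lemma intInt_abs_rpow {u : ℝ → ℝ} (h : ContinuousOn u (Icc (-1:ℝ) 1)) {q : ℝ} (hq : 0 ≤ q) :
    IntervalIntegrable (fun x => |u x| ^ q) volume (-1) 1 := by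
  apply ContinuousOn.intervalIntegrable
  rw [uIcc_of_le (by norm_num : (-1:ℝ) ≤ 1)]
  exact contOn_abs_rpow h hq

lemma contOn_sgn_rpow {u : ℝ → ℝ} (h : ContinuousOn u (Icc (-1:ℝ) 1)) {r : ℝ} (hr : 1 ≤ r) :
    ContinuousOn (fun x => |u x| ^ (r - 1) * u x) (Icc (-1:ℝ) 1) :=
  (contOn_abs_rpow h (by linarith)).mul h

lemma intInt_sgn_rpow {u : ℝ → ℝ} (h : ContinuousOn u (Icc (-1:ℝ) 1)) {r : ℝ} (hr : 1 ≤ r) :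
    IntervalIntegrable (fun x => |u x| ^ (r - 1) * u x) volume (-1) 1 := by
  apply ContinuousOn.intervalIntegrable
  rw [uIcc_of_le (by norm_num : (-1:ℝ) ≤ 1)]
  exact contOn_sgn_rpow h hr

lemma Dpos {p : ℝ} {u g : ℝ → ℝ} (hW : MemW0 p u g) (hNT : ∃ x ∈ Icc (-1 : ℝ) 1, u x ≠ 0)
    (hp0 : 0 < p) : 0 < ∫ x in (-1:ℝ)..1, |u x| ^ p := by
  obtain ⟨x₀, hx₀, hux₀⟩ := hNT
  apply intervalIntegral.integral_pos (by norm_num : (-1:ℝ) < 1)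
    (contOn_abs_rpow hW.contOn hp0.le)
    (fun x _ => Real.rpow_nonneg (abs_nonneg _) _)
  exact ⟨x₀, hx₀, Real.rpow_pos_of_pos (abs_pos.2 hux₀) _⟩

lemma II.indicator {f : ℝ → ℝ} {a b : ℝ} (hf : IntervalIntegrable f volume a b)
    {s : Set ℝ} (hs : MeasurableSet s) :
    IntervalIntegrable (s.indicator f) volume a b := by
  rw [intervalIntegrable_iff] at hf ⊢
  exact hf.indicator hs

lemma uIcc_sub {a b : ℝ} (h1 : -1 ≤ a) (h2 : a ≤ b) (h3 : b ≤ 1) :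
    uIcc a b ⊆ uIcc (-1:ℝ) 1 := by
  rw [uIcc_of_le h2, uIcc_of_le (by norm_num : (-1:ℝ) ≤ 1)]
  exact Icc_subset_Icc h1 h3

lemma integral_split {f : ℝ → ℝ} (hf : IntervalIntegrable f volume (-1) 1) {c₁ c₂ : ℝ}
    (h1 : -1 ≤ c₁) (h2 : c₁ ≤ c₂) (h3 : c₂ ≤ 1) :
    ∫ x in (-1:ℝ)..1, f x
      = (∫ x in (-1:ℝ)..c₁, f x) + (∫ x in c₁..c₂, f x) + ∫ x in c₂..1, f x := by
  have i1 : IntervalIntegrable f volume (-1) c₁ :=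
    hf.mono_set (uIcc_sub le_rfl h1 (h2.trans h3))
  have i2 : IntervalIntegrable f volume c₁ c₂ := hf.mono_set (uIcc_sub h1 h2 h3)
  have i3 : IntervalIntegrable f volume c₂ 1 := hf.mono_set (uIcc_sub (h1.trans h2) h3 le_rfl)
  rw [intervalIntegral.integral_add_adjacent_intervals i1 i2,
    intervalIntegral.integral_add_adjacent_intervals (i1.trans i2) i3]

/-- integral of an `Ioc`-indicator over the full interval -/
lemma integral_indicator_Ioc {f : ℝ → ℝ} (hf : IntervalIntegrable f volume (-1) 1) {c₁ c₂ : ℝ}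
    (h1 : -1 ≤ c₁) (h2 : c₁ ≤ c₂) (h3 : c₂ ≤ 1) :
    (∫ x in (-1:ℝ)..1, (Ioc c₁ c₂).indicator f x) = ∫ x in c₁..c₂, f x := by
  have hind : IntervalIntegrable ((Ioc c₁ c₂).indicator f) volume (-1) 1 :=
    II.indicator hf measurableSet_Ioc
  rw [integral_split hind h1 h2 h3]
  have e1 : (∫ x in (-1:ℝ)..c₁, (Ioc c₁ c₂).indicator f x) = 0 := by
    rw [← intervalIntegral.integral_zero (a := (-1:ℝ)) (b := c₁) (μ := volume)]
    apply intervalIntegral.integral_congr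
    intro x hx
    rw [uIcc_of_le h1] at hx
    exact indicator_of_notMem (fun hm => absurd hm.1 (not_lt.2 hx.2)) f
  have e3 : (∫ x in c₂..(1:ℝ), (Ioc c₁ c₂).indicator f x) = 0 := by
    rw [← intervalIntegral.integral_zero (a := c₂) (b := (1:ℝ)) (μ := volume)]
    apply intervalIntegral.integral_congr_ae
    filter_upwards with x hx
    rw [uIoc_of_le h3] at hx
    exact indicator_of_notMem (fun hm => absurd hm.2 (not_le.2 hx.1)) f
  have e2 : (∫ x in c₁..c₂, (Ioc c₁ c₂).indicator f x) = ∫ x in c₁..c₂, f x := by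
    apply intervalIntegral.integral_congr_ae
    filter_upwards with x hx
    rw [uIoc_of_le h2] at hx
    exact indicator_of_mem hx f
  rw [e1, e2, e3]; ring

lemma Q_lower {p r α : ℝ} {u g : ℝ → ℝ} (hp : 2 ≤ p) (hr1 : p / 2 ≤ r) (hr2 : r ≤ p)
    (hα : α ≤ 0) (hW : MemW0 p u g) (hNT : Nontriv u) :
    9 * α ≤ QRay p r α u g := by
  have hp0 : 0 < p := by linarith
  have hr : 1 ≤ r := by linarith
  have hr0 : 0 < r := by linarith
  have hs0 : 0 < p / r := div_pos hp0 hr0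
  have hs2 : p / r ≤ 2 := by rw [div_le_iff₀ hr0]; linarith
  have hcont := hW.contOn
  set D := ∫ x in (-1:ℝ)..1, |u x| ^ p with hDdef
  have hD : 0 < D := Dpos hW hNT hp0
  set t := D ^ (1/p) with htdef
  have ht : 0 < t := Real.rpow_pos_of_pos hD _
  have htp : t ^ p = D := by
    rw [htdef, ← Real.rpow_mul hD.le, one_div, inv_mul_cancel₀ hp0.ne', Real.rpow_one]
  -- pointwise bound
  have hpt : ∀ x : ℝ, |u x| ^ r ≤ t ^ r + t ^ (r - p) * |u x| ^ p := by
    intro x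
    set y := |u x| / t with hy
    have hy0 : 0 ≤ y := div_nonneg (abs_nonneg _) ht.le
    have hyr : y ^ r ≤ 1 + y ^ p := by
      rcases le_total y 1 with h1 | h1
      · have := Real.rpow_le_one hy0 h1 hr0.le
        have := Real.rpow_nonneg hy0 p
        linarith
      · have := Real.rpow_le_rpow_of_exponent_le h1 hr2
        linarith
    have hur : |u x| ^ r = t ^ r * y ^ r := by
      rw [hy, Real.div_rpow (abs_nonneg _) ht.le]
      field_simp
    have hup : |u x| ^ p = t ^ p * y ^ p := by
      rw [hy, Real.div_rpow (abs_nonneg _) ht.le]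
      field_simp
    rw [hur, hup]
    have h2 : t ^ r * y ^ r ≤ t ^ r * (1 + y ^ p) :=
      mul_le_mul_of_nonneg_left hyr (Real.rpow_nonneg ht.le _)
    have h3 : t ^ (r - p) * (t ^ p * y ^ p) = t ^ r * y ^ p := by
      rw [← mul_assoc, ← Real.rpow_add ht]; ring_nf
    rw [h3]
    linarith [h2]
  -- integrate
  have hBint : IntervalIntegrable (fun x => |u x| ^ r) volume (-1) 1 :=
    intInt_abs_rpow hcont hr0.le
  have hPint : IntervalIntegrable (fun x => |u x| ^ p) volume (-1) 1 :=
    intInt_abs_rpow hcont hp0.le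
  have hRHSint : IntervalIntegrable (fun x => t ^ r + t ^ (r - p) * |u x| ^ p) volume (-1) 1 :=
    (_root_.intervalIntegrable_const).add (hPint.const_mul _)
  have hB3 : (∫ x in (-1:ℝ)..1, |u x| ^ r) ≤ 3 * t ^ r := by
    have h1 : (∫ x in (-1:ℝ)..1, |u x| ^ r) ≤
        ∫ x in (-1:ℝ)..1, (t ^ r + t ^ (r - p) * |u x| ^ p) :=
      intervalIntegral.integral_mono_on (by norm_num) hBint hRHSint (fun x _ => hpt x)
    have h2 : (∫ x in (-1:ℝ)..1, (t ^ r + t ^ (r - p) * |u x| ^ p))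
        = 2 * t ^ r + t ^ (r - p) * D := by
      rw [intervalIntegral.integral_add _root_.intervalIntegrable_const (hPint.const_mul _),
        intervalIntegral.integral_const, intervalIntegral.integral_const_mul, smul_eq_mul,
        ← hDdef]
      norm_num
    have h3 : t ^ (r - p) * D = t ^ r := by
      rw [← htp, ← Real.rpow_add ht]; ring_nf
    linarith [h1.trans_eq h2]
  have hIB : |∫ x in (-1:ℝ)..1, |u x| ^ (r - 1) * u x| ≤ 3 * t ^ r := by
    have h1 : |∫ x in (-1:ℝ)..1, |u x| ^ (r - 1) * u x|
        ≤ ∫ x in (-1:ℝ)..1, abs (|u x| ^ (r - 1) * u x) :=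
      intervalIntegral.abs_integral_le_integral_abs (by norm_num)
    have h2 : (∫ x in (-1:ℝ)..1, abs (|u x| ^ (r - 1) * u x)) = ∫ x in (-1:ℝ)..1, |u x| ^ r :=
      intervalIntegral.integral_congr (fun x _ => abs_rpow_mul_self hr _)
    linarith [h1.trans_eq h2]
  have hI9 : |∫ x in (-1:ℝ)..1, |u x| ^ (r - 1) * u x| ^ (p / r) ≤ 9 * D := by
    have h1 : |∫ x in (-1:ℝ)..1, |u x| ^ (r - 1) * u x| ^ (p / r) ≤ (3 * t ^ r) ^ (p / r) :=
      Real.rpow_le_rpow (abs_nonneg _) hIB hs0.le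
    have h2 : (3 * t ^ r) ^ (p / r) = 3 ^ (p / r) * t ^ p := by
      rw [Real.mul_rpow (by norm_num) (Real.rpow_nonneg ht.le _), ← Real.rpow_mul ht.le]
      congr 1
      field_simp
    have h3 : (3:ℝ) ^ (p / r) ≤ 9 := by
      have h4 := Real.rpow_le_rpow_of_exponent_le (by norm_num : (1:ℝ) ≤ 3) hs2
      have h9 : (3:ℝ) ^ (2:ℝ) = 9 := by
        rw [show (2:ℝ) = ((2:ℕ):ℝ) by norm_num, Real.rpow_natCast]; norm_num
      linarith
    calc |∫ x in (-1:ℝ)..1, |u x| ^ (r - 1) * u x| ^ (p / r)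
        ≤ 3 ^ (p / r) * t ^ p := h1.trans_eq h2
      _ ≤ 9 * D := by rw [htp]; exact mul_le_mul_of_nonneg_right h3 hD.le
  have hA : 0 ≤ ∫ x in (-1:ℝ)..1, |g x| ^ p :=
    intervalIntegral.integral_nonneg (by norm_num) (fun x _ => Real.rpow_nonneg (abs_nonneg _) _)
  have key : α * (9 * D) ≤ α * |∫ x in (-1:ℝ)..1, |u x| ^ (r - 1) * u x| ^ (p / r) :=
    mul_le_mul_of_nonpos_left hI9 hα
  show 9 * α ≤ _ / D
  rw [le_div_iff₀ hD]
  calc 9 * α * D = α * (9 * D) := by ring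
    _ ≤ _ := by exact le_add_of_nonneg_of_le hA key

lemma bump_interval {u : ℝ → ℝ} (hc : ContinuousOn u (Icc (-1:ℝ) 1))
    (hm1 : u (-1) = 0) (h1 : u 1 = 0) {b : ℝ} (hb : b ∈ Ioo (-1:ℝ) 1) (hub : u b < 0) :
    ∃ c₁ c₂ : ℝ, -1 ≤ c₁ ∧ c₁ < c₂ ∧ c₂ ≤ 1 ∧ u c₁ = 0 ∧ u c₂ = 0 ∧
      ∀ x ∈ Ioo c₁ c₂, u x < 0 := by
  have hIcc : Icc (-1:ℝ) b ⊆ Icc (-1:ℝ) 1 := Icc_subset_Icc le_rfl hb.2.le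
  have hIcc' : Icc b (1:ℝ) ⊆ Icc (-1:ℝ) 1 := Icc_subset_Icc hb.1.le le_rfl
  -- left endpoint
  set S₁ := {x ∈ Icc (-1:ℝ) b | 0 ≤ u x} with hS₁
  have hclosed₁ : IsClosed S₁ :=
    (hc.mono hIcc).preimage_isClosed_of_isClosed isClosed_Icc isClosed_Ici
  have hcpt₁ : IsCompact S₁ :=
    isCompact_Icc.of_isClosed_subset hclosed₁ (sep_subset _ _)
  have hne₁ : S₁.Nonempty := ⟨-1, ⟨le_rfl, hb.1.le⟩, by rw [hm1]⟩
  set c₁ := sSup S₁ with hc₁def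
  have hc₁mem : c₁ ∈ S₁ := hcpt₁.sSup_mem hne₁
  have hc₁b : c₁ < b := lt_of_le_of_ne hc₁mem.1.2 (fun h => absurd (h ▸ hc₁mem.2) (not_le.2 hub))
  have hc₁Icc : c₁ ∈ Icc (-1:ℝ) 1 := ⟨hc₁mem.1.1, hc₁mem.1.2.trans hb.2.le⟩
  have hneg₁ : ∀ x ∈ Ioc c₁ b, u x < 0 := by
    intro x hx
    by_contra hle
    push_neg at hle
    have hxS : x ∈ S₁ := ⟨⟨hc₁mem.1.1.trans hx.1.le, hx.2⟩, hle⟩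
    have : x ≤ c₁ := le_csSup hcpt₁.bddAbove hxS
    exact absurd this (not_le.2 hx.1)
  have hc₁zero : u c₁ = 0 := by
    refine le_antisymm ?_ hc₁mem.2
    haveI hnb : (nhdsWithin c₁ (Ioc c₁ b)).NeBot := by
      rw [← mem_closure_iff_nhdsWithin_neBot, closure_Ioc hc₁b.ne]
      exact ⟨le_rfl, hc₁b.le⟩
    have htd : ContinuousWithinAt u (Ioc c₁ b) c₁ :=
      (hc.continuousWithinAt hc₁Icc).mono
        (fun x hx => ⟨hc₁mem.1.1.trans hx.1.le, hx.2.trans hb.2.le⟩)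
    exact le_of_tendsto htd
      (Filter.eventually_of_mem self_mem_nhdsWithin (fun x hx => (hneg₁ x hx).le))
  -- right endpoint
  set S₂ := {x ∈ Icc b (1:ℝ) | 0 ≤ u x} with hS₂
  have hclosed₂ : IsClosed S₂ :=
    (hc.mono hIcc').preimage_isClosed_of_isClosed isClosed_Icc isClosed_Ici
  have hcpt₂ : IsCompact S₂ :=
    isCompact_Icc.of_isClosed_subset hclosed₂ (sep_subset _ _)
  have hne₂ : S₂.Nonempty := ⟨1, ⟨hb.2.le, le_rfl⟩, by rw [h1]⟩
  set c₂ := sInf S₂ with hc₂def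
  have hc₂mem : c₂ ∈ S₂ := hcpt₂.sInf_mem hne₂
  have hc₂b : b < c₂ := lt_of_le_of_ne hc₂mem.1.1 (fun h => absurd (h ▸ hc₂mem.2) (not_le.2 hub))
  have hc₂Icc : c₂ ∈ Icc (-1:ℝ) 1 := ⟨hb.1.le.trans hc₂mem.1.1, hc₂mem.1.2⟩
  have hneg₂ : ∀ x ∈ Ico b c₂, u x < 0 := by
    intro x hx
    by_contra hle
    push_neg at hle
    have hxS : x ∈ S₂ := ⟨⟨hx.1, hx.2.le.trans hc₂mem.1.2⟩, hle⟩
    have : c₂ ≤ x := csInf_le hcpt₂.bddBelow hxS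
    exact absurd this (not_le.2 hx.2)
  have hc₂zero : u c₂ = 0 := by
    refine le_antisymm ?_ hc₂mem.2
    haveI hnb : (nhdsWithin c₂ (Ico b c₂)).NeBot := by
      rw [← mem_closure_iff_nhdsWithin_neBot, closure_Ico hc₂b.ne]
      exact ⟨hc₂b.le, le_rfl⟩
    have htd : ContinuousWithinAt u (Ico b c₂) c₂ :=
      (hc.continuousWithinAt hc₂Icc).mono
        (fun x hx => ⟨hb.1.le.trans hx.1, hx.2.le.trans hc₂mem.1.2⟩)
    exact le_of_tendsto htd
      (Filter.eventually_of_mem self_mem_nhdsWithin (fun x hx => (hneg₂ x hx).le))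
  refine ⟨c₁, c₂, hc₁mem.1.1, hc₁b.trans hc₂b, hc₂mem.1.2, hc₁zero, hc₂zero, ?_⟩
  intro x hx
  rcases le_total x b with hxb | hxb
  · exact hneg₁ x ⟨hx.1, hxb⟩
  · exact hneg₂ x ⟨hxb, hx.2⟩

lemma flip_construction {p r : ℝ} {u g : ℝ → ℝ}
    (hW : MemW0 p u g)
    (hIf : IntervalIntegrable (fun x => |u x| ^ (r - 1) * u x) volume (-1) 1)
    {c₁ c₂ : ℝ} (h1 : -1 ≤ c₁) (h2 : c₁ < c₂) (h3 : c₂ ≤ 1)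
    (hz1 : u c₁ = 0) (hz2 : u c₂ = 0) :
    ∃ v h : ℝ → ℝ, MemW0 p v h ∧ (∀ x, |v x| = |u x|) ∧
      (fun x => |h x| ^ p) = (fun x => |g x| ^ p) ∧
      (∫ x in (-1:ℝ)..1, |v x| ^ (r - 1) * v x)
        = (∫ x in (-1:ℝ)..1, |u x| ^ (r - 1) * u x)
          - 2 * ∫ x in c₁..c₂, |u x| ^ (r - 1) * u x := by
  classical
  set v : ℝ → ℝ := fun x => if x ∈ Ioc c₁ c₂ then -u x else u x with hv
  set h : ℝ → ℝ := fun t => if t ∈ Ioc c₁ c₂ then -g t else g t with hh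
  have hHfun : h = fun t => g t - 2 * (Ioc c₁ c₂).indicator g t := by
    funext t
    by_cases ht : t ∈ Ioc c₁ c₂
    · simp only [hh, if_pos ht, indicator_of_mem ht]; ring
    · simp only [hh, if_neg ht, indicator_of_notMem ht]; ring
  have hII : IntervalIntegrable h volume (-1) 1 := by
    rw [hHfun]
    exact hW.1.sub ((II.indicator hW.1 measurableSet_Ioc).const_mul 2)
  have hprim := hW.2.2.1
  have key1 : ∀ x, -1 ≤ x → x ≤ c₁ → (∫ t in (-1:ℝ)..x, h t) = u x := by
    intro x hx1 hx2
    have : EqOn h g (uIcc (-1) x) := by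
      intro t ht
      rw [uIcc_of_le hx1] at ht
      exact if_neg (fun hm => absurd hm.1 (not_lt.2 (ht.2.trans hx2)))
    rw [intervalIntegral.integral_congr this, ← hprim x ⟨hx1, hx2.trans (h2.le.trans h3)⟩]
  have key2 : ∀ x, c₁ ≤ x → x ≤ c₂ → (∫ t in (-1:ℝ)..x, h t) = -u x := by
    intro x hx1 hx2
    have hxI : x ∈ Icc (-1:ℝ) 1 := ⟨h1.trans hx1, hx2.trans h3⟩
    have i1 : IntervalIntegrable h volume (-1) c₁ :=
      hII.mono_set (uIcc_sub le_rfl h1 (h2.le.trans h3))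
    have i2 : IntervalIntegrable h volume c₁ x :=
      hII.mono_set (uIcc_sub h1 hx1 hxI.2)
    rw [← intervalIntegral.integral_add_adjacent_intervals i1 i2]
    have e1 : (∫ t in (-1:ℝ)..c₁, h t) = 0 := by
      rw [key1 c₁ h1 le_rfl, hz1]
    have e2 : (∫ t in c₁..x, h t) = ∫ t in c₁..x, -g t := by
      apply intervalIntegral.integral_congr_ae
      filter_upwards with t ht
      rw [uIoc_of_le hx1] at ht
      exact if_pos ⟨ht.1, ht.2.trans hx2⟩
    have e3 : (∫ t in c₁..x, g t) = u x - u c₁ := by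
      have j1 : IntervalIntegrable g volume (-1) c₁ :=
        hW.1.mono_set (uIcc_sub le_rfl h1 (h2.le.trans h3))
      have j2 : IntervalIntegrable g volume c₁ x :=
        hW.1.mono_set (uIcc_sub h1 hx1 hxI.2)
      have := intervalIntegral.integral_add_adjacent_intervals j1 j2
      rw [← hprim x hxI, ← hprim c₁ ⟨h1, h2.le.trans h3⟩] at this
      linarith
    rw [e1, e2, intervalIntegral.integral_neg, e3, hz1]
    ring
  have key3 : ∀ x, c₂ ≤ x → x ≤ 1 → (∫ t in (-1:ℝ)..x, h t) = u x := by
    intro x hx1 hx2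
    have hxI : x ∈ Icc (-1:ℝ) 1 := ⟨h1.trans (h2.le.trans hx1), hx2⟩
    have i1 : IntervalIntegrable h volume (-1) c₂ :=
      hII.mono_set (uIcc_sub le_rfl (h1.trans h2.le) h3)
    have i2 : IntervalIntegrable h volume c₂ x :=
      hII.mono_set (uIcc_sub (h1.trans h2.le) hx1 hx2)
    rw [← intervalIntegral.integral_add_adjacent_intervals i1 i2]
    have e1 : (∫ t in (-1:ℝ)..c₂, h t) = 0 := by
      rw [key2 c₂ h2.le le_rfl, hz2]; ring
    have e2 : (∫ t in c₂..x, h t) = ∫ t in c₂..x, g t := by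
      apply intervalIntegral.integral_congr_ae
      filter_upwards with t ht
      rw [uIoc_of_le hx1] at ht
      exact if_neg (fun hm => absurd hm.2 (not_le.2 ht.1))
    have e3 : (∫ t in c₂..x, g t) = u x - u c₂ := by
      have j1 : IntervalIntegrable g volume (-1) c₂ :=
        hW.1.mono_set (uIcc_sub le_rfl (h1.trans h2.le) h3)
      have j2 : IntervalIntegrable g volume c₂ x :=
        hW.1.mono_set (uIcc_sub (h1.trans h2.le) hx1 hx2)
      have := intervalIntegral.integral_add_adjacent_intervals j1 j2
      rw [← hprim x hxI, ← hprim c₂ ⟨h1.trans h2.le, h3⟩] at this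
      linarith
    rw [e1, e2, e3, hz2]
    ring
  have habs : ∀ x, |v x| = |u x| := by
    intro x
    simp only [hv]
    split <;> simp
  have hHp : (fun x => |h x| ^ p) = fun x => |g x| ^ p := by
    funext t
    simp only [hh]
    split <;> simp
  have hMem : MemW0 p v h := by
    refine ⟨hII, by rw [hHp]; exact hW.2.1, ?_, ?_⟩
    · intro x hx
      rcases le_total x c₁ with hc | hc
      · rw [hv]; simp only
        rw [if_neg (fun hm => absurd hm.1 (not_lt.2 hc)), (key1 x hx.1 hc).symm]
      rcases le_total x c₂ with hc' | hc'
      · rw [hv]; simp only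
        rcases eq_or_lt_of_le hc with he | hlt
        · rw [if_neg (fun hm => absurd hm.1 (not_lt.2 he.ge)), (key1 x hx.1 he.ge).symm]
        · rw [if_pos ⟨hlt, hc'⟩, (key2 x hc hc').symm]
      · rw [hv]; simp only
        by_cases hm : x ∈ Ioc c₁ c₂
        · rw [if_pos hm, key2 x hc hm.2]
        · rw [if_neg hm, key3 x hc' hx.2]
    · simp only [hv]
      split <;> simp [hW.2.2.2]
  refine ⟨v, h, hMem, habs, hHp, ?_⟩
  have hJfun : (fun x => |v x| ^ (r - 1) * v x)
      = fun x => (|u x| ^ (r - 1) * u x)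
        - 2 * (Ioc c₁ c₂).indicator (fun t => |u t| ^ (r - 1) * u t) x := by
    funext x
    by_cases hm : x ∈ Ioc c₁ c₂
    · rw [indicator_of_mem hm]
      simp only [hv, if_pos hm, abs_neg]
      ring
    · rw [indicator_of_notMem hm]
      simp only [hv, if_neg hm]
      ring
  rw [hJfun, intervalIntegral.integral_sub hIf
      ((II.indicator hIf measurableSet_Ioc).const_mul 2),
    intervalIntegral.integral_const_mul, integral_indicator_Ioc hIf h1 h2.le h3]

/-- split an integral over (-1,1) at c, where the integrand vanishes on one side -/
lemma integral_left_of_vanish {f : ℝ → ℝ} (hf : IntervalIntegrable f volume (-1) 1) {c : ℝ}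
    (hc : c ∈ Icc (-1:ℝ) 1) (hz : ∀ x, c < x → f x = 0) :
    (∫ x in (-1:ℝ)..1, f x) = ∫ x in (-1:ℝ)..c, f x := by
  have i1 : IntervalIntegrable f volume (-1) c := hf.mono_set (uIcc_sub le_rfl hc.1 hc.2)
  have i2 : IntervalIntegrable f volume c 1 := hf.mono_set (uIcc_sub hc.1 hc.2 le_rfl)
  rw [← intervalIntegral.integral_add_adjacent_intervals i1 i2]
  have e : (∫ x in c..(1:ℝ), f x) = 0 := by
    rw [← intervalIntegral.integral_zero (a := c) (b := (1:ℝ)) (μ := volume)]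
    apply intervalIntegral.integral_congr_ae
    filter_upwards with x hx
    rw [uIoc_of_le hc.2] at hx
    exact hz x hx.1
  rw [e, add_zero]

lemma integral_right_of_vanish {f : ℝ → ℝ} (hf : IntervalIntegrable f volume (-1) 1) {c : ℝ}
    (hc : c ∈ Icc (-1:ℝ) 1) (hz : ∀ x, x ≤ c → f x = 0) :
    (∫ x in (-1:ℝ)..1, f x) = ∫ x in c..1, f x := by
  have i1 : IntervalIntegrable f volume (-1) c := hf.mono_set (uIcc_sub le_rfl hc.1 hc.2)
  have i2 : IntervalIntegrable f volume c 1 := hf.mono_set (uIcc_sub hc.1 hc.2 le_rfl)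
  rw [← intervalIntegral.integral_add_adjacent_intervals i1 i2]
  have e : (∫ x in (-1:ℝ)..c, f x) = 0 := by
    rw [← intervalIntegral.integral_zero (a := (-1:ℝ)) (b := c) (μ := volume)]
    apply intervalIntegral.integral_congr
    intro x hx
    rw [uIcc_of_le hc.1] at hx
    exact hz x hx.2
  rw [e, zero_add]

lemma piece_construction {p : ℝ} {u g : ℝ → ℝ} (hp0 : 0 < p) (hW : MemW0 p u g)
    {c : ℝ} (hc : c ∈ Ioo (-1:ℝ) 1) (hzc : u c = 0)
    (hIu : IntervalIntegrable (fun x => |u x| ^ p) volume (-1) 1) :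
    ∃ u₁ g₁ u₂ g₂ : ℝ → ℝ, MemW0 p u₁ g₁ ∧ MemW0 p u₂ g₂ ∧
      (∀ x, u₁ x = if x ≤ c then u x else 0) ∧ (∀ x, u₂ x = if x ≤ c then 0 else u x) ∧
      (∀ t, c < t → g₁ t = 0) ∧ (u₁ c = 0) ∧
      ((∫ x in (-1:ℝ)..1, |g₁ x| ^ p) = ∫ x in (-1:ℝ)..c, |g x| ^ p) ∧
      ((∫ x in (-1:ℝ)..1, |g₂ x| ^ p) = ∫ x in c..1, |g x| ^ p) ∧
      ((∫ x in (-1:ℝ)..1, |u₁ x| ^ p) = ∫ x in (-1:ℝ)..c, |u x| ^ p) ∧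
      ((∫ x in (-1:ℝ)..1, |u₂ x| ^ p) = ∫ x in c..1, |u x| ^ p) := by
  classical
  have hcI : c ∈ Icc (-1:ℝ) 1 := ⟨hc.1.le, hc.2.le⟩
  set u₁ : ℝ → ℝ := fun x => if x ≤ c then u x else 0 with hu₁
  set g₁ : ℝ → ℝ := fun t => if t ≤ c then g t else 0 with hg₁
  set u₂ : ℝ → ℝ := fun x => if x ≤ c then 0 else u x with hu₂
  set g₂ : ℝ → ℝ := fun t => if t ≤ c then 0 else g t with hg₂
  have hg₁ind : g₁ = (Iic c).indicator g := by
    funext t; simp [hg₁, indicator, mem_Iic]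
  have hg₂sub : g₂ = fun t => g t - g₁ t := by
    funext t; by_cases ht : t ≤ c <;> simp [hg₂, hg₁, ht]
  have iig₁ : IntervalIntegrable g₁ volume (-1) 1 := by
    rw [hg₁ind]; exact II.indicator hW.1 measurableSet_Iic
  have iig₂ : IntervalIntegrable g₂ volume (-1) 1 := by
    rw [hg₂sub]; exact hW.1.sub iig₁
  have habs₁ : (fun t => |g₁ t| ^ p) = (Iic c).indicator (fun t => |g t| ^ p) := by
    funext t; by_cases ht : t ≤ c <;>
      simp [hg₁, ht, indicator, mem_Iic, Real.zero_rpow hp0.ne']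
  have habs₂ : (fun t => |g₂ t| ^ p) = fun t => |g t| ^ p - |g₁ t| ^ p := by
    funext t; by_cases ht : t ≤ c <;>
      simp [hg₂, hg₁, ht, Real.zero_rpow hp0.ne']
  have iiag₁ : IntervalIntegrable (fun t => |g₁ t| ^ p) volume (-1) 1 := by
    rw [habs₁]; exact II.indicator hW.2.1 measurableSet_Iic
  have iiag₂ : IntervalIntegrable (fun t => |g₂ t| ^ p) volume (-1) 1 := by
    rw [habs₂]; exact hW.2.1.sub iiag₁
  have hprim := hW.2.2.1
  -- primitive for u₁
  have prim₁ : ∀ x ∈ Icc (-1:ℝ) 1, u₁ x = ∫ t in (-1:ℝ)..x, g₁ t := by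
    intro x hx
    rcases le_or_gt x c with hxc | hxc
    · have : EqOn g₁ g (uIcc (-1) x) := by
        intro t ht
        rw [uIcc_of_le hx.1] at ht
        exact if_pos (ht.2.trans hxc)
      rw [intervalIntegral.integral_congr this, hu₁]
      simp only [if_pos hxc]
      exact hprim x hx
    · have i1 : IntervalIntegrable g₁ volume (-1) c :=
        iig₁.mono_set (uIcc_sub le_rfl hc.1.le hc.2.le)
      have i2 : IntervalIntegrable g₁ volume c x :=
        iig₁.mono_set (uIcc_sub hc.1.le hxc.le hx.2)
      rw [← intervalIntegral.integral_add_adjacent_intervals i1 i2]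
      have e1 : (∫ t in (-1:ℝ)..c, g₁ t) = 0 := by
        have : EqOn g₁ g (uIcc (-1) c) := by
          intro t ht
          rw [uIcc_of_le hc.1.le] at ht
          exact if_pos ht.2
        rw [intervalIntegral.integral_congr this, ← hprim c hcI, hzc]
      have e2 : (∫ t in c..x, g₁ t) = 0 := by
        rw [← intervalIntegral.integral_zero (a := c) (b := x) (μ := volume)]
        apply intervalIntegral.integral_congr_ae
        filter_upwards with t ht
        rw [uIoc_of_le hxc.le] at ht
        exact if_neg (not_le.2 ht.1)
      rw [e1, e2, hu₁]
      simp [not_le.2 hxc]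
  have prim₂ : ∀ x ∈ Icc (-1:ℝ) 1, u₂ x = ∫ t in (-1:ℝ)..x, g₂ t := by
    intro x hx
    rcases le_or_gt x c with hxc | hxc
    · have : EqOn g₂ (fun _ => (0:ℝ)) (uIcc (-1) x) := by
        intro t ht
        rw [uIcc_of_le hx.1] at ht
        exact if_pos (ht.2.trans hxc)
      rw [intervalIntegral.integral_congr this, intervalIntegral.integral_zero, hu₂]
      simp [hxc]
    · have i1 : IntervalIntegrable g₂ volume (-1) c :=
        iig₂.mono_set (uIcc_sub le_rfl hc.1.le hc.2.le)
      have i2 : IntervalIntegrable g₂ volume c x :=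
        iig₂.mono_set (uIcc_sub hc.1.le hxc.le hx.2)
      rw [← intervalIntegral.integral_add_adjacent_intervals i1 i2]
      have e1 : (∫ t in (-1:ℝ)..c, g₂ t) = 0 := by
        have : EqOn g₂ (fun _ => (0:ℝ)) (uIcc (-1) c) := by
          intro t ht
          rw [uIcc_of_le hc.1.le] at ht
          exact if_pos ht.2
        rw [intervalIntegral.integral_congr this, intervalIntegral.integral_zero]
      have e2 : (∫ t in c..x, g₂ t) = u x - u c := by
        have e2' : (∫ t in c..x, g₂ t) = ∫ t in c..x, g t := by
          apply intervalIntegral.integral_congr_ae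
          filter_upwards with t ht
          rw [uIoc_of_le hxc.le] at ht
          exact if_neg (not_le.2 ht.1)
        have j1 : IntervalIntegrable g volume (-1) c :=
          hW.1.mono_set (uIcc_sub le_rfl hc.1.le hc.2.le)
        have j2 : IntervalIntegrable g volume c x :=
          hW.1.mono_set (uIcc_sub hc.1.le hxc.le hx.2)
        have := intervalIntegral.integral_add_adjacent_intervals j1 j2
        rw [← hprim x hx, ← hprim c hcI] at this
        rw [e2']
        linarith
      rw [e1, e2, hzc, hu₂]
      simp [not_le.2 hxc]
  have hM₁ : MemW0 p u₁ g₁ := ⟨iig₁, iiag₁, prim₁, by simp [hu₁, not_le.2 hc.2]⟩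
  have hM₂ : MemW0 p u₂ g₂ := ⟨iig₂, iiag₂, prim₂, by simp [hu₂, not_le.2 hc.2, hW.2.2.2]⟩
  refine ⟨u₁, g₁, u₂, g₂, hM₁, hM₂, fun x => rfl, fun x => rfl,
    fun t ht => by simp [hg₁, not_le.2 ht], by simp [hu₁, hzc], ?_, ?_, ?_, ?_⟩
  · rw [integral_left_of_vanish iiag₁ hcI
      (fun x hx => by simp [hg₁, not_le.2 hx, Real.zero_rpow hp0.ne'])]
    apply intervalIntegral.integral_congr
    intro t ht
    rw [uIcc_of_le hc.1.le] at ht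
    simp [hg₁, ht.2]
  · rw [integral_right_of_vanish iiag₂ hcI
      (fun x hx => by simp [hg₂, hx, Real.zero_rpow hp0.ne'])]
    apply intervalIntegral.integral_congr_ae
    filter_upwards with t ht
    rw [uIoc_of_le hc.2.le] at ht
    simp [hg₂, not_le.2 ht.1]
  · have iu₁ : IntervalIntegrable (fun x => |u₁ x| ^ p) volume (-1) 1 := by
      have : (fun x => |u₁ x| ^ p) = (Iic c).indicator (fun x => |u x| ^ p) := by
        funext t; by_cases ht : t ≤ c <;>
          simp [hu₁, ht, indicator, mem_Iic, Real.zero_rpow hp0.ne']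
      rw [this]; exact II.indicator hIu measurableSet_Iic
    rw [integral_left_of_vanish iu₁ hcI
      (fun x hx => by simp [hu₁, not_le.2 hx, Real.zero_rpow hp0.ne'])]
    apply intervalIntegral.integral_congr
    intro t ht
    rw [uIcc_of_le hc.1.le] at ht
    simp [hu₁, ht.2]
  · have iu₂ : IntervalIntegrable (fun x => |u₂ x| ^ p) volume (-1) 1 := by
      have h1 : (fun x => |u₁ x| ^ p) = (Iic c).indicator (fun x => |u x| ^ p) := by
        funext t; by_cases ht : t ≤ c <;>
          simp [hu₁, ht, indicator, mem_Iic, Real.zero_rpow hp0.ne']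
      have : (fun x => |u₂ x| ^ p) = fun x => |u x| ^ p - |u₁ x| ^ p := by
        funext t; by_cases ht : t ≤ c <;>
          simp [hu₂, hu₁, ht, Real.zero_rpow hp0.ne']
      rw [this]
      exact hIu.sub (by rw [h1]; exact II.indicator hIu measurableSet_Iic)
    rw [integral_right_of_vanish iu₂ hcI
      (fun x hx => by simp [hu₂, hx, Real.zero_rpow hp0.ne'])]
    apply intervalIntegral.integral_congr_ae
    filter_upwards with t ht
    rw [uIoc_of_le hc.2.le] at ht
    simp [hu₂, not_le.2 ht.1]

lemma stretch_construction {p : ℝ} {w h : ℝ → ℝ} (hp0 : 0 < p) (hW : MemW0 p w h)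
    {c : ℝ} (hc : c ∈ Ioo (-1:ℝ) 1) (hwc : w c = 0)
    (hzw : ∀ x, c < x → w x = 0) (hzh : ∀ t, c < t → h t = 0)
    (hIw : IntervalIntegrable (fun x => |w x| ^ p) volume (-1) 1) :
    ∃ w' h' : ℝ → ℝ, MemW0 p w' h' ∧ (Nontriv w → Nontriv w') ∧
      (∫ x in (-1:ℝ)..1, |h' x| ^ p)
        = ((c+1)/2) ^ (p - 1) * ∫ x in (-1:ℝ)..1, |h x| ^ p ∧
      (∫ x in (-1:ℝ)..1, |w' x| ^ p)
        = (2/(c+1)) * ∫ x in (-1:ℝ)..1, |w x| ^ p := by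
  set k : ℝ := (c+1)/2 with hk
  set d : ℝ := k - 1 with hd
  have hk0 : 0 < k := by rw [hk]; linarith [hc.1]
  have hkne : k ≠ 0 := hk0.ne'
  have hkd : k * 1 + d = c := by rw [hd, hk]; ring
  have hkd' : k * (-1) + d = -1 := by rw [hd]; ring
  have hmap : ∀ x ∈ Icc (-1:ℝ) 1, k * x + d ∈ Icc (-1:ℝ) c := by
    intro x hx
    constructor
    · nlinarith [hx.1, hk0]
    · nlinarith [hx.2, hk0]
  have hmapI : ∀ x ∈ Icc (-1:ℝ) 1, k * x + d ∈ Icc (-1:ℝ) 1 := by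
    intro x hx
    exact ⟨(hmap x hx).1, (hmap x hx).2.trans hc.2.le⟩
  set w' : ℝ → ℝ := fun x => w (k * x + d) with hw'
  set h' : ℝ → ℝ := fun x => k * h (k * x + d) with hh'
  have he1 : (-1 - d)/k = -1 := by
    field_simp
    linarith [hkd']
  have he2 : (c - d)/k = 1 := by
    field_simp
    linarith [hkd]
  -- interval integrability of a composed function
  have hcomp : ∀ f : ℝ → ℝ, IntervalIntegrable f volume (-1) 1 →
      IntervalIntegrable (fun x => f (k * x + d)) volume (-1) 1 := by
    intro f hf
    have i0 : IntervalIntegrable f volume (-1) c :=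
      hf.mono_set (uIcc_sub le_rfl hc.1.le hc.2.le)
    have i1 := i0.comp_add_right d
    have i2 := i1.comp_mul_left (c := k)
    rw [he1, he2] at i2
    exact i2
  have iih' : IntervalIntegrable h' volume (-1) 1 := (hcomp h hW.1).const_mul k
  -- the integral identity for composed functions
  have hint : ∀ f : ℝ → ℝ, (∫ x in (-1:ℝ)..1, f (k * x + d)) = k⁻¹ * ∫ y in (-1:ℝ)..c, f y := by
    intro f
    rw [intervalIntegral.integral_comp_mul_add f hkne d, hkd, hkd', smul_eq_mul]
  have habs' : (fun x => |h' x| ^ p) = fun x => k ^ p * ((fun y => |h y| ^ p) (k * x + d)) := by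
    funext x
    rw [hh']
    simp only
    rw [abs_mul, abs_of_pos hk0, Real.mul_rpow hk0.le (abs_nonneg _)]
  have iiah' : IntervalIntegrable (fun x => |h' x| ^ p) volume (-1) 1 := by
    rw [habs']
    exact (hcomp _ hW.2.1).const_mul _
  have hprim' : ∀ x ∈ Icc (-1:ℝ) 1, w' x = ∫ t in (-1:ℝ)..x, h' t := by
    intro x hx
    have e : (∫ t in (-1:ℝ)..x, h' t) = k * ∫ t in (-1:ℝ)..x, h (k * t + d) := by
      rw [hh']
      exact intervalIntegral.integral_const_mul k _
    rw [e, intervalIntegral.integral_comp_mul_add h hkne d, hkd', smul_eq_mul, ← mul_assoc,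
      mul_inv_cancel₀ hkne, one_mul, hw']
    simp only
    exact hW.2.2.1 (k * x + d) (hmapI x hx)
  have hzero' : w' 1 = 0 := by rw [hw']; simp only; rw [hkd, hwc]
  have hM : MemW0 p w' h' := ⟨iih', iiah', hprim', hzero'⟩
  have hNT : Nontriv w → Nontriv w' := by
    rintro ⟨x₀, hx₀, hwx₀⟩
    have hx₀c : x₀ ≤ c := by
      by_contra hgt
      push_neg at hgt
      exact hwx₀ (hzw x₀ hgt)
    refine ⟨(x₀ - d)/k, ⟨?_, ?_⟩, ?_⟩
    · rw [le_div_iff₀ hk0]; nlinarith [hx₀.1]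
    · rw [div_le_iff₀ hk0]; nlinarith [hx₀c]
    · rw [hw']
      simp only
      have : k * ((x₀ - d)/k) + d = x₀ := by field_simp; ring
      rw [this]
      exact hwx₀
  have hA : (∫ x in (-1:ℝ)..1, |h' x| ^ p)
      = ((c+1)/2) ^ (p - 1) * ∫ x in (-1:ℝ)..1, |h x| ^ p := by
    rw [habs', intervalIntegral.integral_const_mul, hint (fun y => |h y| ^ p)]
    rw [← integral_left_of_vanish hW.2.1 ⟨hc.1.le, hc.2.le⟩
      (fun t ht => by rw [hzh t ht]; simp [Real.zero_rpow hp0.ne'])]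
    rw [← hk, ← mul_assoc]
    congr 1
    rw [Real.rpow_sub hk0, Real.rpow_one]
    field_simp
  have hD : (∫ x in (-1:ℝ)..1, |w' x| ^ p)
      = (2/(c+1)) * ∫ x in (-1:ℝ)..1, |w x| ^ p := by
    have : (fun x => |w' x| ^ p) = fun x => ((fun y => |w y| ^ p) (k * x + d)) := by
      funext x; rw [hw']
    rw [this, hint (fun y => |w y| ^ p)]
    rw [← integral_left_of_vanish hIw ⟨hc.1.le, hc.2.le⟩
      (fun t ht => by rw [hzw t ht]; simp [Real.zero_rpow hp0.ne'])]
    congr 1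
    rw [hk]
    rw [inv_div]
  exact ⟨w', h', hM, hNT, hA, hD⟩


end Helpers


lemma lam_le {p r α : ℝ} (hp : 2 ≤ p) (hr1 : p / 2 ≤ r) (hr2 : r ≤ p) (hα : α ≤ 0)
    {v h : ℝ → ℝ} (hW : MemW0 p v h) (hNT : Nontriv v) :
    lam p r α ≤ QRay p r α v h := by
  apply csInf_le
  · refine ⟨9 * α, ?_⟩
    rintro w ⟨u, g, hW', hNT', rfl⟩
    exact Q_lower hp hr1 hr2 hα hW' hNT'
  · exact ⟨v, h, hW, hNT, rfl⟩

lemma MemW0.neg' {p : ℝ} {u g : ℝ → ℝ} (hW : MemW0 p u g) :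
    MemW0 p (fun x => -u x) (fun x => -g x) := by
  refine ⟨hW.1.neg, ?_, ?_, by simp [hW.2.2.2]⟩
  · have e : (fun x => |(-g x)| ^ p) = fun x => |g x| ^ p := by
      funext x; rw [abs_neg]
    rw [e]; exact hW.2.1
  · intro x hx
    rw [intervalIntegral.integral_neg, ← hW.2.2.1 x hx]

lemma QRay_neg {p r α : ℝ} (hr : 1 ≤ r) (u g : ℝ → ℝ) :
    QRay p r α (fun x => -u x) (fun x => -g x) = QRay p r α u g := by
  unfold QRay
  have e1 : (fun x => |(-g x)| ^ p) = fun x => |g x| ^ p := by funext x; rw [abs_neg]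
  have e2 : (fun x => |(-u x)| ^ p) = fun x => |u x| ^ p := by funext x; rw [abs_neg]
  have e3 : (fun x => |(-u x)| ^ (r - 1) * -u x) = fun x => -(|u x| ^ (r - 1) * u x) := by
    funext x; rw [abs_neg]; ring
  rw [e1, e2, e3, intervalIntegral.integral_neg, abs_neg]

lemma eq_zero_of_A_zero {p : ℝ} {u g : ℝ → ℝ} (hp0 : 0 < p) (hW : MemW0 p u g)
    (hA : (∫ x in (-1:ℝ)..1, |g x| ^ p) = 0) : ∀ x ∈ Icc (-1:ℝ) 1, u x = 0 := by
  have hint := intervalIntegrable_iff.1 hW.2.1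
  rw [uIoc_of_le (by norm_num : (-1:ℝ) ≤ 1)] at hint
  rw [intervalIntegral.integral_of_le (by norm_num : (-1:ℝ) ≤ 1)] at hA
  have hae : ∀ᵐ t ∂(volume.restrict (Ioc (-1:ℝ) 1)), |g t| ^ p = 0 := by
    have := (MeasureTheory.integral_eq_zero_iff_of_nonneg
      (fun t => Real.rpow_nonneg (abs_nonneg (g t)) p) hint).1 hA
    filter_upwards [this] with t ht using ht
  have hg0 : ∀ᵐ t ∂(volume : Measure ℝ), t ∈ Ioc (-1:ℝ) 1 → g t = 0 := by
    have h2 := (ae_restrict_iff' measurableSet_Ioc).1 hae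
    filter_upwards [h2] with t ht hm
    have h3 := ht hm
    have h4 : ¬ (0 < |g t|) := by
      intro hpos
      have := Real.rpow_pos_of_pos hpos p
      rw [h3] at this
      exact lt_irrefl 0 this
    have h5 : |g t| = 0 := le_antisymm (not_lt.1 h4) (abs_nonneg _)
    exact abs_eq_zero.1 h5
  intro x hx
  rw [hW.2.2.1 x hx]
  have hg0' : ∀ᵐ t ∂(volume : Measure ℝ), t ∈ uIoc (-1:ℝ) x → g t = 0 := by
    filter_upwards [hg0] with t ht hm
    apply ht
    rw [uIoc_of_le hx.1] at hm
    exact ⟨hm.1, hm.2.trans hx.2⟩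
  calc (∫ t in (-1:ℝ)..x, g t) = ∫ t in (-1:ℝ)..x, (0:ℝ) :=
        intervalIntegral.integral_congr_ae hg0'
    _ = 0 := intervalIntegral.integral_zero

lemma flip_beats {p r α : ℝ} (hp : 2 ≤ p) (hr1 : p / 2 ≤ r) (hr2 : r ≤ p) (hα : α < 0)
    {u g : ℝ → ℝ} (hW : MemW0 p u g) (hNT : Nontriv u)
    {b : ℝ} (hb : b ∈ Ioo (-1:ℝ) 1) (hub : u b < 0)
    (hI : 0 ≤ ∫ x in (-1:ℝ)..1, |u x| ^ (r - 1) * u x) :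
    lam p r α < QRay p r α u g := by
  have hp0 : 0 < p := by linarith
  have hr : 1 ≤ r := by linarith
  have hs0 : 0 < p / r := div_pos hp0 (by linarith)
  have hcont := hW.contOn
  have hm1 : u (-1) = 0 := by
    rw [hW.2.2.1 (-1) (by norm_num), intervalIntegral.integral_same]
  obtain ⟨c₁, c₂, h1, h2, h3, hz1, hz2, hneg⟩ := bump_interval hcont hm1 hW.2.2.2 hb hub
  have hIf : IntervalIntegrable (fun x => |u x| ^ (r - 1) * u x) volume (-1) 1 :=
    intInt_sgn_rpow hcont hr
  obtain ⟨v, h, hMv, habs, hHp, hJ⟩ := flip_construction hW hIf h1 h2 h3 hz1 hz2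
  set I := ∫ x in (-1:ℝ)..1, |u x| ^ (r - 1) * u x with hIdef
  set M := ∫ x in c₁..c₂, |u x| ^ (r - 1) * u x with hMdef
  have hmid : M < 0 := by
    have hpos : 0 < ∫ x in c₁..c₂, -(|u x| ^ (r - 1) * u x) := by
      apply intervalIntegral.integral_pos h2
      · exact ((contOn_sgn_rpow hcont hr).mono (Icc_subset_Icc h1 h3)).neg
      · intro x hx
        have hxle : u x ≤ 0 := by
          rcases eq_or_lt_of_le hx.2 with he | hlt
          · rw [he, hz2]
          · exact (hneg x ⟨hx.1, hlt⟩).le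
        nlinarith [Real.rpow_nonneg (abs_nonneg (u x)) (r - 1)]
      · refine ⟨(c₁ + c₂)/2, ⟨by linarith, by linarith⟩, ?_⟩
        have hu : u ((c₁ + c₂)/2) < 0 := hneg _ ⟨by linarith, by linarith⟩
        have := Real.rpow_pos_of_pos (abs_pos.2 hu.ne) (r - 1)
        nlinarith
    rw [intervalIntegral.integral_neg] at hpos
    rw [hMdef]
    linarith
  have hJI : |I| < |∫ x in (-1:ℝ)..1, |v x| ^ (r - 1) * v x| := by
    rw [hJ, abs_of_nonneg hI, abs_of_nonneg (by linarith : (0:ℝ) ≤ I - 2 * M)]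
    linarith
  have hDv : (∫ x in (-1:ℝ)..1, |v x| ^ p) = ∫ x in (-1:ℝ)..1, |u x| ^ p := by
    have e : (fun x => |v x| ^ p) = fun x => |u x| ^ p := funext fun x => by rw [habs x]
    rw [e]
  have hNTv : Nontriv v := by
    obtain ⟨x₀, hx₀, hux₀⟩ := hNT
    refine ⟨x₀, hx₀, fun hv0 => hux₀ (abs_eq_zero.1 ?_)⟩
    rw [← habs x₀, hv0, abs_zero]
  have hD := Dpos hW hNT hp0
  have hQlt : QRay p r α v h < QRay p r α u g := by
    unfold QRay
    rw [hDv, hHp]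
    have hnum : α * |∫ x in (-1:ℝ)..1, |v x| ^ (r - 1) * v x| ^ (p / r)
        < α * |I| ^ (p / r) := by
      exact mul_lt_mul_of_neg_left (Real.rpow_lt_rpow (abs_nonneg I) hJI hs0) hα
    rw [div_lt_div_iff₀ hD hD]
    apply mul_lt_mul_of_pos_right _ hD
    rw [← hIdef]
    linarith
  have hle := lam_le hp hr1 hr2 hα.le hMv hNTv
  calc lam p r α ≤ QRay p r α v h := hle
    _ < QRay p r α u g := hQlt

lemma alpha0_case {p r : ℝ} (hp : 2 ≤ p) (hr1 : p / 2 ≤ r) (hr2 : r ≤ p)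
    {u g : ℝ → ℝ} (hW : MemW0 p u g) (hNT : Nontriv u) {c xl xr : ℝ}
    (hc : c ∈ Ioo (-1:ℝ) 1) (hc0 : u c = 0)
    (hxl : xl ∈ Icc (-1:ℝ) 1) (hxlc : xl ≤ c) (hul : u xl ≠ 0)
    (hxr : xr ∈ Icc (-1:ℝ) 1) (hxrc : c < xr) (hur : u xr ≠ 0)
    (hmin : QRay p r 0 u g = lam p r 0) : False := by
  have hp0 : 0 < p := by linarith
  have hr : 1 ≤ r := by linarith
  have hcont := hW.contOn
  have hD := Dpos hW hNT hp0
  have hIu := intInt_abs_rpow hcont hp0.le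
  obtain ⟨u₁, g₁, u₂, g₂, hM₁, hM₂, hf₁, hf₂, hg₁z, hu₁c, hA₁, hA₂, hD₁, hD₂⟩ :=
    piece_construction hp0 hW hc hc0 hIu
  have hNT₁ : Nontriv u₁ := ⟨xl, hxl, by rw [hf₁ xl, if_pos hxlc]; exact hul⟩
  have hNT₂ : Nontriv u₂ := ⟨xr, hxr, by rw [hf₂ xr, if_neg (not_le.2 hxrc)]; exact hur⟩
  have hD₁pos : 0 < ∫ x in (-1:ℝ)..1, |u₁ x| ^ p := Dpos hM₁ hNT₁ hp0
  have hD₂pos : 0 < ∫ x in (-1:ℝ)..1, |u₂ x| ^ p := Dpos hM₂ hNT₂ hp0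
  have hQ : ∀ w z : ℝ → ℝ, QRay p r 0 w z
      = (∫ x in (-1:ℝ)..1, |z x| ^ p) / ∫ x in (-1:ℝ)..1, |w x| ^ p := by
    intro w z
    unfold QRay
    rw [zero_mul, add_zero]
  have hq₁ := lam_le hp hr1 hr2 le_rfl hM₁ hNT₁
  have hq₂ := lam_le hp hr1 hr2 le_rfl hM₂ hNT₂
  rw [hQ] at hq₁ hq₂ hmin
  have hsA : (∫ x in (-1:ℝ)..1, |g x| ^ p)
      = (∫ x in (-1:ℝ)..c, |g x| ^ p) + ∫ x in c..1, |g x| ^ p := by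
    rw [intervalIntegral.integral_add_adjacent_intervals
      (hW.2.1.mono_set (uIcc_sub le_rfl hc.1.le hc.2.le))
      (hW.2.1.mono_set (uIcc_sub hc.1.le hc.2.le le_rfl))]
  have hsD : (∫ x in (-1:ℝ)..1, |u x| ^ p)
      = (∫ x in (-1:ℝ)..c, |u x| ^ p) + ∫ x in c..1, |u x| ^ p := by
    rw [intervalIntegral.integral_add_adjacent_intervals
      (hIu.mono_set (uIcc_sub le_rfl hc.1.le hc.2.le))
      (hIu.mono_set (uIcc_sub hc.1.le hc.2.le le_rfl))]
  set lam0 := lam p r 0 with hlamdef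
  have e₁ : lam0 * ∫ x in (-1:ℝ)..1, |u₁ x| ^ p ≤ ∫ x in (-1:ℝ)..1, |g₁ x| ^ p :=
    (le_div_iff₀ hD₁pos).1 hq₁
  have e₂ : lam0 * ∫ x in (-1:ℝ)..1, |u₂ x| ^ p ≤ ∫ x in (-1:ℝ)..1, |g₂ x| ^ p :=
    (le_div_iff₀ hD₂pos).1 hq₂
  have emin : (∫ x in (-1:ℝ)..1, |g x| ^ p) = lam0 * ∫ x in (-1:ℝ)..1, |u x| ^ p := by
    rw [← hmin]
    field_simp
  have hA1eq : (∫ x in (-1:ℝ)..1, |g₁ x| ^ p) = lam0 * ∫ x in (-1:ℝ)..1, |u₁ x| ^ p := by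
    rw [hA₁, hD₁] at e₁
    rw [hA₂, hD₂] at e₂
    rw [hsA, hsD] at emin
    rw [hA₁, hD₁]
    have hexp : lam0 * ((∫ x in (-1:ℝ)..c, |u x| ^ p) + ∫ x in c..1, |u x| ^ p)
        = lam0 * (∫ x in (-1:ℝ)..c, |u x| ^ p) + lam0 * ∫ x in c..1, |u x| ^ p :=
      mul_add _ _ _
    linarith
  -- lam0 > 0
  have hApos : 0 < ∫ x in (-1:ℝ)..1, |g x| ^ p := by
    have hA0 : (0:ℝ) ≤ ∫ x in (-1:ℝ)..1, |g x| ^ p :=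
      intervalIntegral.integral_nonneg (by norm_num) (fun x _ => Real.rpow_nonneg (abs_nonneg (g x)) p)
    rcases hA0.eq_or_lt with he | hlt
    · exfalso
      obtain ⟨x₀, hx₀, hux₀⟩ := hNT
      exact hux₀ (eq_zero_of_A_zero hp0 hW he.symm x₀ hx₀)
    · exact hlt
  have hlam0 : 0 < lam0 := by
    rw [← hmin]
    exact div_pos hApos hD
  -- stretch
  have hzw : ∀ x, c < x → u₁ x = 0 := fun x hx => by rw [hf₁ x, if_neg (not_le.2 hx)]
  obtain ⟨w', h', hM', hNT', hA', hD'⟩ := stretch_construction hp0 hM₁ hc hu₁c hzw hg₁z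
    (intInt_abs_rpow hM₁.contOn hp0.le)
  have hq' := lam_le hp hr1 hr2 le_rfl hM' (hNT' hNT₁)
  rw [hQ, hA', hD'] at hq'
  set k : ℝ := (c + 1)/2 with hkdef
  have hk0 : 0 < k := by rw [hkdef]; linarith [hc.1]
  have hk1 : k < 1 := by rw [hkdef]; linarith [hc.2]
  have hkp : k ^ p < 1 := Real.rpow_lt_one hk0.le hk1 hp0
  have hkk : k ^ (p - 1) * k = k ^ p := by
    have e := Real.rpow_add hk0 (p - 1) 1
    rw [Real.rpow_one] at e
    rw [← e]
    congr 1
    ring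
  have hrhs : (k ^ (p - 1) * ∫ x in (-1:ℝ)..1, |g₁ x| ^ p)
      / ((2/(c + 1)) * ∫ x in (-1:ℝ)..1, |u₁ x| ^ p) = k ^ p * lam0 := by
    have h2c : (2/(c + 1)) = k⁻¹ := by rw [hkdef, inv_div]
    rw [hA1eq, h2c, div_eq_iff (ne_of_gt (mul_pos (inv_pos.2 hk0) hD₁pos))]
    rw [← hkk]
    field_simp
  rw [hrhs] at hq'
  nlinarith [mul_lt_of_lt_one_left hlam0 hkp]

lemma testfun {p : ℝ} (hp0 : 0 < p) :
    MemW0 p (fun x => 1 - |x|) (fun x => if x < 0 then (1:ℝ) else -1) := by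
  classical
  set g₀ : ℝ → ℝ := fun x => if x < 0 then (1:ℝ) else -1 with hg₀
  have hind : g₀ = fun x => (Iio (0:ℝ)).indicator (fun _ => (2:ℝ)) x - 1 := by
    funext x
    by_cases hx : x < 0 <;> simp [hg₀, hx, indicator, mem_Iio] <;> norm_num
  have hii : IntervalIntegrable g₀ volume (-1) 1 := by
    rw [hind]
    exact (II.indicator _root_.intervalIntegrable_const measurableSet_Iio).sub
      _root_.intervalIntegrable_const
  have habs : (fun x => |g₀ x| ^ p) = fun _ => (1:ℝ) := by
    funext x
    by_cases hx : x < 0 <;> simp [hg₀, hx]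
  have hneg : ∀ x : ℝ, -1 ≤ x → x ≤ 0 → (∫ t in (-1:ℝ)..x, g₀ t) = 1 + x := by
    intro x h1 h2
    have he : (∫ t in (-1:ℝ)..x, g₀ t) = ∫ t in (-1:ℝ)..x, (1:ℝ) := by
      apply intervalIntegral.integral_congr_ae
      have h0 : ∀ᵐ (t : ℝ) ∂(volume : Measure ℝ), t ≠ 0 := by
        rw [MeasureTheory.ae_iff]
        simpa using measure_singleton (0:ℝ)
      filter_upwards [h0] with t ht hmem
      rw [uIoc_of_le h1] at hmem
      have : t < 0 := lt_of_le_of_ne (hmem.2.trans h2) ht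
      simp [hg₀, this]
    rw [he, intervalIntegral.integral_const, smul_eq_mul]
    ring
  refine ⟨hii, by rw [habs]; exact _root_.intervalIntegrable_const, ?_, by norm_num⟩
  intro x hx
  show 1 - |x| = _
  rcases le_or_gt x 0 with hx0 | hx0
  · rw [hneg x hx.1 hx0, abs_of_nonpos hx0]
    ring
  · have i1 : IntervalIntegrable g₀ volume (-1) 0 :=
      hii.mono_set (uIcc_sub le_rfl (by norm_num) (by norm_num))
    have i2 : IntervalIntegrable g₀ volume 0 x :=
      hii.mono_set (uIcc_sub (by norm_num) hx0.le hx.2)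
    rw [← intervalIntegral.integral_add_adjacent_intervals i1 i2]
    have e2 : (∫ t in (0:ℝ)..x, g₀ t) = -x := by
      have e2' : (∫ t in (0:ℝ)..x, g₀ t) = ∫ t in (0:ℝ)..x, (-1:ℝ) := by
        apply intervalIntegral.integral_congr_ae
        filter_upwards with t hmem
        rw [uIoc_of_le hx0.le] at hmem
        simp [hg₀, not_lt.2 hmem.1.le]
      rw [e2', intervalIntegral.integral_const, smul_eq_mul]
      ring
    rw [hneg 0 (by norm_num) le_rfl, e2, abs_of_pos hx0]
    ring

/-- for `α ≤ 0` minimizers do not change sign, and `λ_α → -∞` as `α → -∞`. -/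
theorem minimizer_constant_sign_of_nonpos (p r : ℝ) (hp : 2 ≤ p) (hr1 : p / 2 ≤ r)
    (hr2 : r ≤ p) :
    (∀ α ≤ (0 : ℝ), ∀ u g, MemW0 p u g → Nontriv u → QRay p r α u g = lam p r α →
      (∀ x ∈ Ioo (-1 : ℝ) 1, 0 ≤ u x) ∨ (∀ x ∈ Ioo (-1 : ℝ) 1, u x ≤ 0)) ∧
    Filter.Tendsto (fun α => lam p r α) Filter.atBot Filter.atBot := by
  have hp0 : 0 < p := by linarith
  have hr : 1 ≤ r := by linarith
  constructor
  · intro α hα u g hW hNT hmin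
    by_contra hcon
    push_neg at hcon
    obtain ⟨⟨bneg, hbneg, hubneg⟩, ⟨bpos, hbpos, hubpos⟩⟩ := hcon
    rcases eq_or_lt_of_le hα with rfl | hlt
    · -- α = 0
      have hcont := hW.contOn
      have hne : bneg ≠ bpos := fun h => by rw [h] at hubneg; linarith
      rcases lt_or_gt_of_ne hne with hlt' | hgt'
      · obtain ⟨c, hc, hc0⟩ := intermediate_value_Ioo hlt'.le
          (hcont.mono (Icc_subset_Icc hbneg.1.le hbpos.2.le))
          (show (0:ℝ) ∈ Ioo (u bneg) (u bpos) from ⟨hubneg, hubpos⟩)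
        exact alpha0_case hp hr1 hr2 hW hNT
          ⟨lt_trans hbneg.1 hc.1, lt_trans hc.2 hbpos.2⟩ hc0
          ⟨hbneg.1.le, hbneg.2.le⟩ hc.1.le (ne_of_lt hubneg)
          ⟨hbpos.1.le, hbpos.2.le⟩ hc.2 (ne_of_gt hubpos) hmin
      · obtain ⟨c, hc, hc0⟩ := intermediate_value_Ioo' hgt'.le
          (hcont.mono (Icc_subset_Icc hbpos.1.le hbneg.2.le))
          (show (0:ℝ) ∈ Ioo (u bneg) (u bpos) from ⟨hubneg, hubpos⟩)
        exact alpha0_case hp hr1 hr2 hW hNT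
          ⟨lt_trans hbpos.1 hc.1, lt_trans hc.2 hbneg.2⟩ hc0
          ⟨hbpos.1.le, hbpos.2.le⟩ hc.1.le (ne_of_gt hubpos)
          ⟨hbneg.1.le, hbneg.2.le⟩ hc.2 (ne_of_lt hubneg) hmin
    · -- α < 0
      rcases le_or_gt 0 (∫ x in (-1:ℝ)..1, |u x| ^ (r - 1) * u x) with hI | hI
      · have := flip_beats hp hr1 hr2 hlt hW hNT hbneg hubneg hI
        rw [hmin] at this
        exact lt_irrefl _ this
      · have hWn := hW.neg'
        have hNTn : Nontriv (fun x => -u x) := by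
          obtain ⟨x₀, hx₀, h⟩ := hNT
          exact ⟨x₀, hx₀, neg_ne_zero.2 h⟩
        have hIn : 0 ≤ ∫ x in (-1:ℝ)..1, |(fun y => -u y) x| ^ (r - 1) * (fun y => -u y) x := by
          have e : (fun x => |(fun y => -u y) x| ^ (r - 1) * (fun y => -u y) x)
              = fun x => -(|u x| ^ (r - 1) * u x) := by
            funext x; simp only; rw [abs_neg]; ring
          rw [e, intervalIntegral.integral_neg]
          linarith
        have hbn : (fun y => -u y) bpos < 0 := by
          simp only
          linarith
        have := flip_beats hp hr1 hr2 hlt hWn hNTn hbpos hbn hIn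
        rw [QRay_neg hr, hmin] at this
        exact lt_irrefl _ this
  · -- λ_α → -∞
    have hW₀ := testfun (p := p) hp0
    set u₀ : ℝ → ℝ := fun x => 1 - |x| with hu₀
    set g₀ : ℝ → ℝ := fun x => if x < 0 then (1:ℝ) else -1 with hg₀
    have hNT₀ : Nontriv u₀ := ⟨0, by norm_num, by rw [hu₀]; norm_num⟩
    have hcont₀ : ContinuousOn u₀ (Icc (-1:ℝ) 1) :=
      (continuous_const.sub continuous_abs).continuousOn
    have hA₀ : (∫ x in (-1:ℝ)..1, |g₀ x| ^ p) = 2 := by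
      have e : (fun x => |g₀ x| ^ p) = fun _ => (1:ℝ) := by
        funext x; by_cases hx : x < 0 <;> simp [hg₀, hx]
      rw [e, intervalIntegral.integral_const, smul_eq_mul]
      norm_num
    have hB₀ : 0 < ∫ x in (-1:ℝ)..1, |u₀ x| ^ (r - 1) * u₀ x := by
      apply intervalIntegral.integral_pos (by norm_num) (contOn_sgn_rpow hcont₀ hr)
      · intro x hx
        have hxa : |x| ≤ 1 := abs_le.2 ⟨hx.1.le, hx.2⟩
        have h1 : 0 ≤ u₀ x := by rw [hu₀]; simp only; linarith
        exact mul_nonneg (Real.rpow_nonneg (abs_nonneg _) _) h1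
      · refine ⟨0, by norm_num, ?_⟩
        have h0 : u₀ 0 = 1 := by rw [hu₀]; norm_num
        rw [h0]
        simp [Real.one_rpow]
    have hD₀ : 0 < ∫ x in (-1:ℝ)..1, |u₀ x| ^ p := Dpos hW₀ hNT₀ hp0
    set C := (∫ x in (-1:ℝ)..1, |u₀ x| ^ (r - 1) * u₀ x) ^ (p / r) with hC
    have hCpos : 0 < C := Real.rpow_pos_of_pos hB₀ _
    have hQval : ∀ α : ℝ, QRay p r α u₀ g₀
        = (2 + α * C) / ∫ x in (-1:ℝ)..1, |u₀ x| ^ p := by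
      intro α
      unfold QRay
      rw [hA₀, abs_of_pos hB₀, hC]
    have hbound : ∀ α : ℝ, α ≤ 0 →
        lam p r α ≤ (2 + α * C) / ∫ x in (-1:ℝ)..1, |u₀ x| ^ p := by
      intro α hα
      have := lam_le hp hr1 hr2 hα hW₀ hNT₀
      rwa [hQval α] at this
    have htend : Filter.Tendsto (fun α : ℝ => (2 + α * C) / ∫ x in (-1:ℝ)..1, |u₀ x| ^ p)
        Filter.atBot Filter.atBot := by
      apply Filter.Tendsto.atBot_div_const hD₀
      apply Filter.tendsto_atBot_add_const_left
      exact Filter.Tendsto.atBot_mul_const hCpos Filter.tendsto_id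
    exact Filter.tendsto_atBot_mono'  _
      (Filter.eventually_atBot.2 ⟨0, fun α hα => hbound α hα⟩) htend
end
end

section
/- Let p ≥ 2. For every fixed m ∈ (0,1) and y ∈ [0,1), the function r ↦ h(m,p,r,y) is strictly increasing on the interval [p/2, p]. -/
open Set MeasureTheory intervalIntegral Real

noncomputable section

/-- `R(m,p,r) = (1-m^p)/(1+m^r)`. -/
def Rfun (m p r : ℝ) : ℝ := (1 - m ^ p) / (1 + m ^ r)

/-- The auxiliary function `H(m,p,r)`. -/
def Hfun (m p r : ℝ) : ℝ :=
  (∫ y in (0 : ℝ)..1, (1 - Rfun m p r * (1 - y ^ r) - y ^ p) ^ (-(1 / p))) +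
  ∫ y in (0 : ℝ)..1, m * (1 - Rfun m p r * (1 + m ^ r * y ^ r) - m ^ p * y ^ p) ^ (-(1 / p))

/-- The integrand `h(m,p,r,y)` defining `H`. -/
def hfun (m p r y : ℝ) : ℝ :=
  (1 - Rfun m p r * (1 - y ^ r) - y ^ p) ^ (-(1 / p)) +
  m * (1 - Rfun m p r * (1 + m ^ r * y ^ r) - m ^ p * y ^ p) ^ (-(1 / p))


/-! ### Auxiliary lemmas for the proof of `hfun_strictMonoOn` -/

lemma exp_aux1 (x : ℝ) : x * Real.exp (-x) ≤ 1 - Real.exp (-x) := by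
  have h := mul_le_mul_of_nonneg_right (Real.add_one_le_exp x) (Real.exp_pos (-x)).le
  rw [← Real.exp_add] at h
  simp at h
  nlinarith [h]

lemma exp_aux2 {x : ℝ} (hx : 0 ≤ x) : 2 - x ≤ (2 + x) * Real.exp (-x) := by
  set g : ℝ → ℝ := fun t => (2 + t) * Real.exp (-t) + t with hg
  have hd : ∀ t : ℝ, HasDerivAt g (1 - (1 + t) * Real.exp (-t)) t := by
    intro t
    have he : HasDerivAt (fun t : ℝ => Real.exp (-t)) (-Real.exp (-t)) t := by
      exact ((Real.hasDerivAt_exp (-t)).comp t (hasDerivAt_neg t)).congr_deriv (by ring)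
    have h1 : HasDerivAt (fun t : ℝ => (2 + t) * Real.exp (-t))
        (1 * Real.exp (-t) + (2 + t) * -Real.exp (-t)) t :=
      (((hasDerivAt_id t).const_add 2)).mul he
    have := h1.add (hasDerivAt_id t)
    exact this.congr_deriv (by ring)
  have hmono : MonotoneOn g (Ici (0:ℝ)) := by
    apply monotoneOn_of_deriv_nonneg (convex_Ici 0)
    · exact fun t _ => (hd t).continuousAt.continuousWithinAt
    · exact fun t _ => (hd t).differentiableAt.differentiableWithinAt
    · intro t ht
      rw [(hd t).deriv]
      have h1 : (1 + t) * Real.exp (-t) ≤ 1 := by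
        have h := mul_le_mul_of_nonneg_right (Real.add_one_le_exp t) (Real.exp_pos (-t)).le
        rw [← Real.exp_add] at h
        simp at h
        nlinarith [h]
      linarith
  have h0 : g 0 ≤ g x := hmono (by simp) hx hx
  simp [hg] at h0
  nlinarith [h0]

lemma hasDerivAt_base_rpow {y : ℝ} (hy : 0 ≤ y) {r : ℝ} (hr : 0 < r) :
    HasDerivAt (fun s : ℝ => y ^ s) (y ^ r * Real.log y) r := by
  rcases hy.eq_or_lt with h | h
  · have hev : (fun s : ℝ => y ^ s) =ᶠ[nhds r] (fun _ => (0:ℝ)) := by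
      filter_upwards [isOpen_Ioi.mem_nhds (show r ∈ Ioi (0:ℝ) from hr)] with s hs
      rw [← h, Real.zero_rpow (ne_of_gt hs)]
    have h0 : HasDerivAt (fun _ : ℝ => (0:ℝ)) 0 r := hasDerivAt_const r 0
    have := h0.congr_of_eventuallyEq hev
    simpa [← h, Real.zero_rpow hr.ne', Real.log_zero] using this
  · exact (Real.hasStrictDerivAt_const_rpow h r).hasDerivAt

/-- `S(r) = (1-m^p)(1-y^r)/(1+m^r)`, so that the first base in `hfun` is `(1-y^p) - S r`. -/
def Sfn (m y p r : ℝ) : ℝ := (1 - m ^ p) * (1 - y ^ r) / (1 + m ^ r)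

/-- derivative of `Sfn` in `r`. -/
def Sfn' (m y p r : ℝ) : ℝ :=
  (1 - m ^ p) * ((y ^ r * (-Real.log y)) * (1 + m ^ r) + (1 - y ^ r) * (m ^ r * (-Real.log m)))
    / (1 + m ^ r) ^ 2

/-- `T(r) = m^(r-p) S(r)`. -/
def Tfn (m y p r : ℝ) : ℝ := m ^ (r - p) * Sfn m y p r

/-- derivative of `Tfn` in `r`. -/
def Tfn' (m y p r : ℝ) : ℝ :=
  m ^ (r - p) * (Sfn' m y p r + Real.log m * Sfn m y p r)

lemma Sfn_hasDerivAt {m y p r : ℝ} (hm0 : 0 < m) (hy : 0 ≤ y) (hr : 0 < r) :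
    HasDerivAt (Sfn m y p) (Sfn' m y p r) r := by
  have hmr : (0:ℝ) < 1 + m ^ r := by positivity
  have hN : HasDerivAt (fun s : ℝ => (1 - m ^ p) * (1 - y ^ s))
      ((1 - m ^ p) * (-(y ^ r * Real.log y))) r :=
    ((hasDerivAt_base_rpow hy hr).const_sub 1).const_mul _
  have hD : HasDerivAt (fun s : ℝ => 1 + m ^ s) (m ^ r * Real.log m) r :=
    (hasDerivAt_base_rpow hm0.le hr).const_add 1
  have := hN.div hD hmr.ne'
  refine this.congr_deriv ?_
  unfold Sfn'
  field_simp
  ring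

lemma Tfn_hasDerivAt {m y p r : ℝ} (hm0 : 0 < m) (hy : 0 ≤ y) (hr : 0 < r) :
    HasDerivAt (Tfn m y p) (Tfn' m y p r) r := by
  have h1 : HasDerivAt (fun s : ℝ => m ^ (s - p)) (m ^ (r - p) * Real.log m) r := by
    have := ((Real.hasStrictDerivAt_const_rpow hm0 (r - p)).hasDerivAt).comp r
      ((hasDerivAt_id r).sub_const p)
    exact this.congr_deriv (by ring)
  have := h1.mul (Sfn_hasDerivAt (p := p) hm0 hy hr)
  refine this.congr_deriv ?_
  unfold Tfn'
  ring

lemma base1_eq (m y p r : ℝ) :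
    1 - Rfun m p r * (1 - y ^ r) - y ^ p = (1 - y ^ p) - Sfn m y p r := by
  unfold Rfun Sfn; ring

lemma base2_eq {m : ℝ} (hm0 : 0 < m) (y p r : ℝ) :
    1 - Rfun m p r * (1 + m ^ r * y ^ r) - m ^ p * y ^ p
      = m ^ p * ((1 - y ^ p) + Tfn m y p r) := by
  have hmr : (0:ℝ) < 1 + m ^ r := by positivity
  have hmm : m ^ r = m ^ p * m ^ (r - p) := by
    rw [← Real.rpow_add hm0]; ring_nf
  unfold Rfun Tfn Sfn
  rw [hmm]
  field_simp
  ring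

lemma hfun_eq {m y p r : ℝ} (hm0 : 0 < m) (hp0 : 0 < p)
    (hAT : 0 ≤ (1 - y ^ p) + Tfn m y p r) :
    hfun m p r y
      = ((1 - y ^ p) - Sfn m y p r) ^ (-(1 / p))
        + ((1 - y ^ p) + Tfn m y p r) ^ (-(1 / p)) := by
  unfold hfun
  rw [base1_eq, base2_eq hm0]
  congr 1
  rw [Real.mul_rpow (by positivity) hAT, ← Real.rpow_mul hm0.le,
    show p * -(1/p) = -1 by field_simp, Real.rpow_neg_one]
  field_simp

set_option maxHeartbeats 1000000 in
/-- `r ↦ h(m,p,r,y)` is strictly increasing on `[p/2, p]`. -/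
theorem hfun_strictMonoOn (p : ℝ) (hp : 2 ≤ p) (m : ℝ) (hm : m ∈ Ioo (0 : ℝ) 1)
    (y : ℝ) (hy : y ∈ Ico (0 : ℝ) 1) :
    StrictMonoOn (fun r => hfun m p r y) (Icc (p / 2) p) := by
  obtain ⟨hm0, hm1⟩ := hm
  obtain ⟨hy0, hy1⟩ := hy
  have hp0 : (0:ℝ) < p := by linarith
  have hq0 : (0:ℝ) < 1/p := by positivity
  have hK0 : 0 < 1 - m ^ p := by
    have := Real.rpow_lt_one hm0.le hm1 hp0; linarith
  have hL : 0 < -Real.log m := by have := Real.log_neg hm0 hm1; linarith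
  -- pointwise facts on the interval
  have facts : ∀ r ∈ Icc (p/2) p, 0 < r ∧ 0 < (1 - y ^ p) - Sfn m y p r ∧
      0 < Sfn m y p r ∧ 0 < Tfn m y p r ∧ 0 < Sfn' m y p r := by
    intro r hr
    obtain ⟨hr1, hr2⟩ := hr
    have hr0 : 0 < r := by linarith
    have ha0 : 0 < m ^ r := Real.rpow_pos_of_pos hm0 r
    have ha1 : m ^ r < 1 := Real.rpow_lt_one hm0.le hm1 hr0
    have hb0 : 0 ≤ y ^ r := Real.rpow_nonneg hy0 r
    have hb1 : y ^ r < 1 := Real.rpow_lt_one hy0 hy1 hr0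
    have hD0 : 0 < 1 + m ^ r := by linarith
    have hS0 : 0 < Sfn m y p r := by
      unfold Sfn
      exact div_pos (mul_pos hK0 (by linarith)) hD0
    have hyp : y ^ p ≤ y ^ r := by
      rcases hy0.eq_or_lt with h | h
      · rw [← h, Real.zero_rpow hp0.ne', Real.zero_rpow hr0.ne']
      · exact Real.rpow_le_rpow_of_exponent_ge h hy1.le hr2
    have hSlt : Sfn m y p r < 1 - y ^ r := by
      unfold Sfn
      rw [div_lt_iff₀ hD0]
      have hmp0 : 0 < m ^ p := Real.rpow_pos_of_pos hm0 p
      nlinarith [mul_pos (sub_pos.mpr hb1) (show (0:ℝ) < m ^ p + m ^ r by linarith)]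
    have hX1 : 0 < (1 - y ^ p) - Sfn m y p r := by linarith
    have hT0 : 0 < Tfn m y p r := mul_pos (Real.rpow_pos_of_pos hm0 _) hS0
    have hS'0 : 0 < Sfn' m y p r := by
      unfold Sfn'
      apply div_pos _ (by positivity)
      apply mul_pos hK0
      have hbl : 0 ≤ y ^ r * (-Real.log y) :=
        mul_nonneg hb0 (by have := Real.log_nonpos hy0 hy1.le; linarith)
      nlinarith [mul_pos (mul_pos (sub_pos.mpr hb1) ha0) hL]
    exact ⟨hr0, hX1, hS0, hT0, hS'0⟩
  -- derivative of the reparametrized function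
  have hderiv : ∀ r ∈ Icc (p/2) p,
      HasDerivAt (fun r => ((1 - y ^ p) - Sfn m y p r) ^ (-(1/p))
          + ((1 - y ^ p) + Tfn m y p r) ^ (-(1/p)))
        (-(Sfn' m y p r) * (-(1/p)) * ((1 - y ^ p) - Sfn m y p r) ^ (-(1/p) - 1)
          + Tfn' m y p r * (-(1/p)) * ((1 - y ^ p) + Tfn m y p r) ^ (-(1/p) - 1)) r := by
    intro r hr
    obtain ⟨hr0, hX1, hS0, hT0, hS'0⟩ := facts r hr
    have hX2 : 0 < (1 - y ^ p) + Tfn m y p r := by linarith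
    have h1 : HasDerivAt (fun r => ((1 - y ^ p) - Sfn m y p r) ^ (-(1/p)))
        (-(Sfn' m y p r) * (-(1/p)) * ((1 - y ^ p) - Sfn m y p r) ^ (-(1/p) - 1)) r :=
      ((Sfn_hasDerivAt hm0 hy0 hr0).const_sub (1 - y ^ p)).rpow_const (Or.inl hX1.ne')
    have h2 : HasDerivAt (fun r => ((1 - y ^ p) + Tfn m y p r) ^ (-(1/p)))
        (Tfn' m y p r * (-(1/p)) * ((1 - y ^ p) + Tfn m y p r) ^ (-(1/p) - 1)) r :=
      ((Tfn_hasDerivAt hm0 hy0 hr0).const_add (1 - y ^ p)).rpow_const (Or.inl hX2.ne')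
    exact h1.add h2
  -- positivity of the derivative on the interior
  have hpos : ∀ r ∈ Ioo (p/2) p,
      0 < -(Sfn' m y p r) * (-(1/p)) * ((1 - y ^ p) - Sfn m y p r) ^ (-(1/p) - 1)
          + Tfn' m y p r * (-(1/p)) * ((1 - y ^ p) + Tfn m y p r) ^ (-(1/p) - 1) := by
    intro r hr
    obtain ⟨hr0, hX1, hS0, hT0, hS'0⟩ := facts r (Ioo_subset_Icc_self hr)
    have hX2 : 0 < (1 - y ^ p) + Tfn m y p r := by linarith
    have ha0 : 0 < m ^ r := Real.rpow_pos_of_pos hm0 r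
    have ha1 : m ^ r < 1 := Real.rpow_lt_one hm0.le hm1 hr0
    have hb0 : 0 ≤ y ^ r := Real.rpow_nonneg hy0 r
    have hb1 : y ^ r < 1 := Real.rpow_lt_one hy0 hy1 hr0
    have hD0 : 0 < 1 + m ^ r := by linarith
    have hu0 : 0 < p - r := by linarith [hr.2]
    have hur : p - r < r := by have := hr.1; linarith
    have hw0 : 0 < m ^ (p - r) := Real.rpow_pos_of_pos hm0 _
    have hw1 : m ^ (p - r) < 1 := Real.rpow_lt_one hm0.le hm1 hu0
    -- the key inequality T' < S'
    have h1 : y ^ r * (-Real.log y) / (1 - y ^ r) ≤ 1 / r := by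
      rcases hy0.eq_or_lt with h | h
      · rw [← h, Real.zero_rpow hr0.ne']
        simp
        positivity
      · have hl0 : 0 < -Real.log y := by have := Real.log_neg h hy1; linarith
        have hb : y ^ r = Real.exp (-(r * (-Real.log y))) := by
          rw [Real.rpow_def_of_pos h]
          ring_nf
        rw [div_le_div_iff₀ (by linarith) hr0, hb]
        have := exp_aux1 (r * (-Real.log y))
        nlinarith [Real.exp_pos (-(r * (-Real.log y)))]
    have h2 : m ^ r * (-Real.log m) / (1 + m ^ r) < (-Real.log m) / 2 := by
      rw [div_lt_div_iff₀ hD0 two_pos]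
      nlinarith
    have h3 : (1:ℝ)/r ≤ 1/(p - r) := one_div_le_one_div_of_le hu0 hur.le
    have hC' : (1 - m ^ (p - r)) * (1/(p - r) + (-Real.log m)/2) ≤ -Real.log m := by
      have hwE : m ^ (p - r) = Real.exp (-((p - r) * (-Real.log m))) := by
        rw [Real.rpow_def_of_pos hm0]
        ring_nf
      set x := (p - r) * (-Real.log m) with hxdef
      have hx0 : 0 < x := mul_pos hu0 hL
      have he2 := exp_aux2 hx0.le
      have hlm : Real.log m ≠ 0 := ne_of_lt (by linarith)
      have hinv : 1/(p - r) = (-Real.log m)/x := by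
        rw [hxdef]; field_simp
      rw [hwE, hinv]
      rw [show (-Real.log m)/x + (-Real.log m)/2 = (-Real.log m) * (2 + x) / (2 * x) by
        field_simp; ring]
      have key : (1 - Real.exp (-x)) * (2 + x) ≤ 2 * x := by
        nlinarith [Real.exp_pos (-x)]
      have hLx : 0 ≤ (-Real.log m) / (2 * x) := by positivity
      have h4 := mul_le_mul_of_nonneg_right key hLx
      have h5 : 2 * x * ((-Real.log m) / (2 * x)) = -Real.log m := by
        field_simp
      calc (1 - Real.exp (-x)) * (-Real.log m * (2 + x) / (2 * x))
          = (1 - Real.exp (-x)) * (2 + x) * ((-Real.log m) / (2 * x)) := by ring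
        _ ≤ 2 * x * ((-Real.log m) / (2 * x)) := h4
        _ = -Real.log m := h5
    have hratio : Sfn' m y p r = Sfn m y p r *
        (y ^ r * (-Real.log y) / (1 - y ^ r) + m ^ r * (-Real.log m) / (1 + m ^ r)) := by
      have hb1' : (1:ℝ) - y ^ r ≠ 0 := ne_of_gt (by linarith)
      unfold Sfn Sfn'
      field_simp
    have hsig : y ^ r * (-Real.log y) / (1 - y ^ r) + m ^ r * (-Real.log m) / (1 + m ^ r)
        < 1 / (p - r) + (-Real.log m) / 2 := by linarith
    have hsum : Sfn' m y p r * (1 - m ^ (p - r)) < (-Real.log m) * Sfn m y p r := by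
      rw [hratio]
      have hstep1 : (y ^ r * (-Real.log y) / (1 - y ^ r)
            + m ^ r * (-Real.log m) / (1 + m ^ r)) * (1 - m ^ (p - r))
          < (1 / (p - r) + (-Real.log m) / 2) * (1 - m ^ (p - r)) :=
        mul_lt_mul_of_pos_right hsig (by linarith)
      have hc2 : (1 / (p - r) + (-Real.log m) / 2) * (1 - m ^ (p - r)) ≤ -Real.log m := by
        rw [mul_comm]; exact hC'
      calc Sfn m y p r * (y ^ r * (-Real.log y) / (1 - y ^ r)
            + m ^ r * (-Real.log m) / (1 + m ^ r)) * (1 - m ^ (p - r))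
          = Sfn m y p r * ((y ^ r * (-Real.log y) / (1 - y ^ r)
            + m ^ r * (-Real.log m) / (1 + m ^ r)) * (1 - m ^ (p - r))) := by ring
        _ < Sfn m y p r * (-Real.log m) :=
            mul_lt_mul_of_pos_left (lt_of_lt_of_le hstep1 hc2) hS0
        _ = -Real.log m * Sfn m y p r := mul_comm _ _
    have hC : Tfn' m y p r < Sfn' m y p r := by
      unfold Tfn'
      rw [show r - p = -(p - r) by ring, Real.rpow_neg hm0.le]
      have h5 : Sfn' m y p r + Real.log m * Sfn m y p r < Sfn' m y p r * m ^ (p - r) := by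
        linarith [hsum]
      calc (m ^ (p - r))⁻¹ * (Sfn' m y p r + Real.log m * Sfn m y p r)
          < (m ^ (p - r))⁻¹ * (Sfn' m y p r * m ^ (p - r)) :=
            mul_lt_mul_of_pos_left h5 (inv_pos.mpr hw0)
        _ = Sfn' m y p r := by field_simp
    -- conclude positivity
    have hc0 : (0:ℝ) < 1 / p + 1 := by positivity
    have hP1 : ((1 - y ^ p) - Sfn m y p r) ^ (-(1/p) - 1)
        = (((1 - y ^ p) - Sfn m y p r) ^ (1/p + 1))⁻¹ := by
      rw [show -(1/p) - 1 = -(1/p + 1) by ring, Real.rpow_neg hX1.le]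
    have hP2 : ((1 - y ^ p) + Tfn m y p r) ^ (-(1/p) - 1)
        = (((1 - y ^ p) + Tfn m y p r) ^ (1/p + 1))⁻¹ := by
      rw [show -(1/p) - 1 = -(1/p + 1) by ring, Real.rpow_neg hX2.le]
    have hle : ((1 - y ^ p) - Sfn m y p r) ^ (1/p + 1)
        ≤ ((1 - y ^ p) + Tfn m y p r) ^ (1/p + 1) :=
      Real.rpow_le_rpow hX1.le (by linarith) hc0.le
    have hX1c : 0 < ((1 - y ^ p) - Sfn m y p r) ^ (1/p + 1) := Real.rpow_pos_of_pos hX1 _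
    have hX2c : 0 < ((1 - y ^ p) + Tfn m y p r) ^ (1/p + 1) := Real.rpow_pos_of_pos hX2 _
    have hmain : ((1 - y ^ p) + Tfn m y p r) ^ (-(1/p) - 1) * Tfn' m y p r
        < ((1 - y ^ p) - Sfn m y p r) ^ (-(1/p) - 1) * Sfn' m y p r := by
      rw [hP1, hP2]
      have hinvle : (((1 - y ^ p) + Tfn m y p r) ^ (1/p + 1))⁻¹
          ≤ (((1 - y ^ p) - Sfn m y p r) ^ (1/p + 1))⁻¹ := by
        have := one_div_le_one_div_of_le hX1c hle
        simpa [one_div] using this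
      rcases le_or_gt (Tfn' m y p r) 0 with h | h
      · have h6 : (((1 - y ^ p) + Tfn m y p r) ^ (1/p + 1))⁻¹ * Tfn' m y p r ≤ 0 :=
          mul_nonpos_of_nonneg_of_nonpos (inv_nonneg.mpr hX2c.le) h
        have h7 : 0 < (((1 - y ^ p) - Sfn m y p r) ^ (1/p + 1))⁻¹ * Sfn' m y p r :=
          mul_pos (inv_pos.mpr hX1c) hS'0
        linarith
      · calc (((1 - y ^ p) + Tfn m y p r) ^ (1/p + 1))⁻¹ * Tfn' m y p r
            ≤ (((1 - y ^ p) - Sfn m y p r) ^ (1/p + 1))⁻¹ * Tfn' m y p r :=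
              mul_le_mul_of_nonneg_right hinvle h.le
          _ < (((1 - y ^ p) - Sfn m y p r) ^ (1/p + 1))⁻¹ * Sfn' m y p r :=
              mul_lt_mul_of_pos_left hC (inv_pos.mpr hX1c)
    have hfinal : 0 < (1/p) * (((1 - y ^ p) - Sfn m y p r) ^ (-(1/p) - 1) * Sfn' m y p r
        - ((1 - y ^ p) + Tfn m y p r) ^ (-(1/p) - 1) * Tfn' m y p r) :=
      mul_pos hq0 (sub_pos.mpr hmain)
    nlinarith [hfinal]
  -- assemble
  have hmono : StrictMonoOn (fun r => ((1 - y ^ p) - Sfn m y p r) ^ (-(1/p))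
      + ((1 - y ^ p) + Tfn m y p r) ^ (-(1/p))) (Icc (p/2) p) := by
    apply strictMonoOn_of_deriv_pos (convex_Icc _ _)
    · intro r hr
      exact (hderiv r hr).continuousAt.continuousWithinAt
    · intro r hr
      rw [interior_Icc] at hr
      rw [(hderiv r (Ioo_subset_Icc_self hr)).deriv]
      exact hpos r hr
  refine hmono.congr fun r hr => ?_
  obtain ⟨hr0, hX1, hS0, hT0, hS'0⟩ := facts r hr
  exact (hfun_eq hm0 hp0 (by linarith)).symm
end
end

section
/- Let p ≥ 2. For every m ∈ (0,1) and every r ∈ [p/2, p], one has μ(m,r) := (m^r + m^{r−p})·log(1/m) + (1/r)·(1 + m^r − m^{r−p} − m^{2r−p}) > 0; equivalently, for r < p, (m^r + m^{r−p})·log(m) / ((1 + m^r)(1 − m^{r−p})) > 1/r. -/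
open Set MeasureTheory intervalIntegral Real

noncomputable section

/-- `sinh x < x * cosh x` for `x > 0`, in exponential form. -/
lemma sinh_lt_mul_cosh (x : ℝ) (hx : 0 < x) :
    Real.exp x - Real.exp (-x) < x * (Real.exp x + Real.exp (-x)) := by
  set f : ℝ → ℝ := fun t => t * (Real.exp t + Real.exp (-t)) - (Real.exp t - Real.exp (-t))
    with hf
  have hd : ∀ t : ℝ, HasDerivAt f (t * (Real.exp t - Real.exp (-t))) t := by
    intro t
    have h1 : HasDerivAt Real.exp (Real.exp t) t := Real.hasDerivAt_exp t
    have h2 : HasDerivAt (fun s : ℝ => Real.exp (-s)) (-Real.exp (-t)) t := by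
      convert (hasDerivAt_neg t).exp using 1
      ring
    have h3 := ((hasDerivAt_id t : HasDerivAt (fun s : ℝ => s) 1 t).mul (h1.add h2)).sub (h1.sub h2)
    exact h3.congr_deriv (by simp only [Pi.add_apply, id_eq]; ring)
  have hmono : StrictMonoOn f (Ici 0) := by
    apply strictMonoOn_of_deriv_pos (convex_Ici 0)
    · exact Continuous.continuousOn (by fun_prop)
    · intro t ht
      rw [interior_Ici] at ht
      have ht' : (0:ℝ) < t := ht
      rw [(hd t).deriv]
      have : Real.exp (-t) < Real.exp t := Real.exp_lt_exp.2 (by linarith)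
      exact mul_pos ht' (by linarith)
  have h0 : f 0 = 0 := by simp [hf]
  have := hmono (Set.self_mem_Ici) (Set.mem_Ici.2 hx.le) hx
  rw [h0] at this
  simp only [hf] at this
  linarith

/-- Core inequality `F(x,y) > 0` for `0 < x`, `0 ≤ y ≤ x`. -/
lemma F_pos (x y : ℝ) (hx : 0 < x) (hy0 : 0 ≤ y) (hyx : y ≤ x) :
    0 < x * (Real.exp (-x) + Real.exp y) - (1 + Real.exp (-x)) * (Real.exp y - 1) := by
  have hu : 0 < Real.exp (-x) := Real.exp_pos _
  have hv1 : 1 ≤ Real.exp y := Real.one_le_exp hy0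
  rcases le_or_gt (1 + Real.exp (-x)) x with hc | hc
  · nlinarith [mul_nonneg (sub_nonneg.2 hv1) (sub_nonneg.2 hc), mul_pos hx hu]
  · have hvx : Real.exp y ≤ Real.exp x := Real.exp_le_exp.2 hyx
    have hsinh := sinh_lt_mul_cosh x hx
    have hprod : Real.exp x * Real.exp (-x) = 1 := by
      rw [← Real.exp_add]; simp
    nlinarith [mul_nonneg (sub_nonneg.2 hvx) (by linarith : (0:ℝ) ≤ 1 + Real.exp (-x) - x),
      hsinh, hprod]

/-- positivity of `μ(m,r)` and the equivalent logarithmic inequality. -/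
theorem mu_pos (p m r : ℝ) (hp : 2 ≤ p) (hm : m ∈ Ioo (0 : ℝ) 1)
    (hr1 : p / 2 ≤ r) (hr2 : r ≤ p) :
    0 < (m ^ r + m ^ (r - p)) * Real.log (1 / m) +
        (1 / r) * (1 + m ^ r - m ^ (r - p) - m ^ (2 * r - p)) ∧
    (r < p →
      1 / r < (m ^ r + m ^ (r - p)) * Real.log m /
        ((1 + m ^ r) * (1 - m ^ (r - p)))) := by
  obtain ⟨hm0, hm1⟩ := hm
  have hl : Real.log m < 0 := Real.log_neg hm0 hm1
  have hr0 : 0 < r := by linarith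
  set l := Real.log m with hl_def
  have hx : 0 < r * (-l) := mul_pos hr0 (by linarith)
  have hy0 : 0 ≤ (p - r) * (-l) := mul_nonneg (by linarith) (by linarith)
  have hyx : (p - r) * (-l) ≤ r * (-l) :=
    mul_le_mul_of_nonneg_right (by linarith) (by linarith)
  have hF0 := F_pos (r * (-l)) ((p - r) * (-l)) hx hy0 hyx
  have e1 : -(r * (-l)) = l * r := by ring
  have e2 : (p - r) * (-l) = l * (r - p) := by ring
  rw [e1, e2] at hF0
  -- now hF0 : 0 < r * -l * (exp (l*r) + exp (l*(r-p))) - (1 + exp (l*r)) * (exp (l*(r-p)) - 1)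
  have hrpow : ∀ t : ℝ, m ^ t = Real.exp (l * t) := fun t => Real.rpow_def_of_pos hm0 t
  have h2rp : m ^ (2 * r - p) = Real.exp (l * r) * Real.exp (l * (r - p)) := by
    rw [hrpow, ← Real.exp_add]
    ring_nf
  have hlog1 : Real.log (1 / m) = -l := by rw [one_div, Real.log_inv]
  set A := Real.exp (l * r) with hA
  set B := Real.exp (l * (r - p)) with hB
  have hA0 : 0 < A := Real.exp_pos _
  constructor
  · rw [hrpow r, hrpow (r - p), h2rp, hlog1]
    have key : (A + B) * (-l) + 1 / r * (1 + A - B - A * B) =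
        (r * (-l) * (A + B) - (1 + A) * (B - 1)) / r := by
      field_simp
      ring
    rw [key]
    exact div_pos hF0 hr0
  · intro hrp
    rw [hrpow r, hrpow (r - p)]
    have hB1 : 1 < B := by
      rw [hB]
      have : 0 < l * (r - p) := mul_pos_of_neg_of_neg hl (by linarith)
      exact Real.one_lt_exp_iff.2 this
    have hD : (1 + A) * (1 - B) < 0 :=
      mul_neg_of_pos_of_neg (by linarith) (by linarith)
    rw [lt_div_iff_of_neg hD]
    have hrr : (1:ℝ) / r * ((1 + A) * (1 - B)) = ((1 + A) * (1 - B)) / r := by ring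
    rw [hrr, lt_div_iff₀ hr0]
    nlinarith [hF0]
end
end

section
/- Let p ≥ 2. For every m ∈ [0,1], H(m, p, p/2) = π_p/(p−1)^{1/p}; that is, the function m ↦ H(m,p,p/2) is constant on [0,1]. -/
open Set MeasureTheory intervalIntegral Real

noncomputable section
set_option maxHeartbeats 2000000

namespace HfunAux

lemma eq_of_log_eq {L R : ℝ} (hL : 0 < L) (hR : 0 < R) (h : Real.log L = Real.log R) : L = R := by
  rw [← Real.exp_log hL, ← Real.exp_log hR, h]

lemma lmul {x y : ℝ} (hx : 0 < x) (hy : 0 < y) : Real.log (x * y) = Real.log x + Real.log y :=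
  Real.log_mul hx.ne' hy.ne'

lemma ldiv {x y : ℝ} (hx : 0 < x) (hy : 0 < y) : Real.log (x / y) = Real.log x - Real.log y :=
  Real.log_div hx.ne' hy.ne'

lemma linv (x : ℝ) : Real.log x⁻¹ = -Real.log x := Real.log_inv x

lemma lrpow {x : ℝ} (c : ℝ) (hx : 0 < x) : Real.log (x ^ c) = c * Real.log x :=
  Real.log_rpow hx c

lemma cov_Ioo {f f' : ℝ → ℝ} (him : f '' Ioo 0 1 = Ioo 0 1)
    (hd : ∀ x ∈ Ioo (0:ℝ) 1, HasDerivWithinAt f (f' x) (Ioo 0 1) x)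
    (hinj : InjOn f (Ioo (0:ℝ) 1)) (g : ℝ → ℝ) :
    ∫ x in Ioo (0:ℝ) 1, g x = ∫ x in Ioo (0:ℝ) 1, |f' x| * g (f x) := by
  have h := integral_image_eq_integral_abs_deriv_smul measurableSet_Ioo hd hinj g
  rw [him] at h
  simpa [smul_eq_mul] using h

lemma cov_rpow (e : ℝ) (he : 0 < e) (g : ℝ → ℝ) :
    ∫ x in Ioo (0:ℝ) 1, g x
      = ∫ x in Ioo (0:ℝ) 1, |e * x ^ (e - 1)| * g (x ^ e) := by
  apply cov_Ioo
  · apply Subset.antisymm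
    · rintro _ ⟨x, hx, rfl⟩
      exact ⟨Real.rpow_pos_of_pos hx.1 e, Real.rpow_lt_one hx.1.le hx.2 he⟩
    · rintro y hy
      refine ⟨y ^ e⁻¹, ⟨Real.rpow_pos_of_pos hy.1 _,
        Real.rpow_lt_one hy.1.le hy.2 (by positivity)⟩, ?_⟩
      show (y ^ e⁻¹) ^ e = y
      rw [← Real.rpow_mul hy.1.le, inv_mul_cancel₀ he.ne', Real.rpow_one]
  · intro x hx
    exact (Real.hasDerivAt_rpow_const (Or.inl hx.1.ne')).hasDerivWithinAt
  · intro x hx y hy hxy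
    simp only at hxy
    have h : (x ^ e) ^ e⁻¹ = (y ^ e) ^ e⁻¹ := by rw [hxy]
    rwa [← Real.rpow_mul hx.1.le, ← Real.rpow_mul hy.1.le, mul_inv_cancel₀ he.ne',
      Real.rpow_one, Real.rpow_one] at h

lemma cov_mobius (e D : ℝ) (hD : 0 < D) (he : 0 < e) (g : ℝ → ℝ) :
    ∫ x in Ioo (0:ℝ) 1, g x
      = ∫ x in Ioo (0:ℝ) 1,
          |e * D / (D + (e - D) * x) ^ 2| * g (e * x / (D + (e - D) * x)) := by
  have hden : ∀ x : ℝ, 0 ≤ x → x ≤ 1 → 0 < D + (e - D) * x := by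
    intro x h0 h1
    nlinarith [mul_nonneg hD.le (sub_nonneg.2 h1), mul_nonneg he.le h0]
  apply cov_Ioo
  · apply Subset.antisymm
    · rintro _ ⟨x, hx, rfl⟩
      have hd := hden x hx.1.le hx.2.le
      constructor
      · exact div_pos (mul_pos he hx.1) hd
      · rw [div_lt_one hd]
        nlinarith [hx.2, mul_pos hD (sub_pos.2 hx.2)]
    · rintro y hy
      have hq : 0 < e * (1 - y) + D * y := by
        nlinarith [mul_pos he (sub_pos.2 hy.2), mul_pos hD hy.1]
      refine ⟨D * y / (e * (1 - y) + D * y), ⟨div_pos (mul_pos hD hy.1) hq, ?_⟩, ?_⟩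
      · rw [div_lt_one hq]; nlinarith [mul_pos he (sub_pos.2 hy.2), mul_pos hD hy.1]
      · show e * (D * y / (e * (1 - y) + D * y)) / (D + (e - D) * (D * y / (e * (1 - y) + D * y))) = y
        have hkey : D + (e - D) * (D * y / (e * (1 - y) + D * y)) = D * e / (e * (1 - y) + D * y) := by
          field_simp; ring
        rw [hkey]
        field_simp
  · intro x hx
    have hd := hden x hx.1.le hx.2.le
    have hd1 : HasDerivAt (fun x : ℝ => e * x) e x := by
      simpa using (hasDerivAt_id x).const_mul e
    have hd2 : HasDerivAt (fun x : ℝ => D + (e - D) * x) (e - D) x := by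
      simpa using ((hasDerivAt_id x).const_mul (e - D)).const_add D
    have h := hd1.div hd2 hd.ne'
    have : HasDerivAt (fun x => e * x / (D + (e - D) * x)) (e * D / (D + (e - D) * x) ^ 2) x := by
      rw [show e * D / (D + (e - D) * x) ^ 2 = (e * (D + (e - D) * x) - e * x * (e - D)) / (D + (e - D) * x) ^ 2 by congr 1; ring]
      exact h
    exact this.hasDerivWithinAt
  · intro x hx y hy hxy
    have hdx := hden x hx.1.le hx.2.le
    have hdy := hden y hy.1.le hy.2.le
    rw [div_eq_div_iff hdx.ne' hdy.ne'] at hxy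
    have h2 : e * D * x = e * D * y := by linear_combination hxy
    exact mul_left_cancel₀ (by positivity) h2

end HfunAux

namespace HfunAux

lemma integrableOn_beta {s t : ℝ} (hs : -1 < s) (hs0 : s ≤ 0) (ht : -1 < t) (ht0 : t ≤ 0) :
    IntegrableOn (fun z => z ^ s * (1 - z) ^ t) (Ioo (0:ℝ) 1) := by
  have hcont : ∀ u : Set ℝ, u ⊆ Ioo 0 1 → MeasurableSet u →
      AEStronglyMeasurable (fun z : ℝ => z ^ s * (1 - z) ^ t) (volume.restrict u) := by
    intro u hu hmu
    apply ContinuousOn.aestronglyMeasurable _ hmu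
    apply ContinuousOn.mul
    · exact continuousOn_id.rpow_const fun x hx => Or.inl (ne_of_gt (hu hx).1)
    · exact (continuousOn_const.sub continuousOn_id).rpow_const
        fun x hx => Or.inl (by have := (hu hx).2; intro hc; simp only [Pi.sub_apply, id] at hc; linarith)
  have piece1 : IntegrableOn (fun z => z ^ s * (1 - z) ^ t) (Ioc (0:ℝ) 2⁻¹) := by
    have hint : IntegrableOn (fun z : ℝ => ((2:ℝ)⁻¹ ^ t) * z ^ s) (Ioc (0:ℝ) 2⁻¹) := by
      have h0 := (intervalIntegrable_rpow' (a := 0) (b := 2⁻¹) hs)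
      rw [intervalIntegrable_iff_integrableOn_Ioc_of_le (by norm_num)] at h0
      exact h0.const_mul _
    apply Integrable.mono hint (hcont _ (fun z hz => ⟨hz.1, lt_of_le_of_lt hz.2 (by norm_num)⟩) measurableSet_Ioc)
    refine (ae_restrict_iff' measurableSet_Ioc).2 (ae_of_all _ ?_)
    intro z hz
    have hz0 : 0 < z := hz.1
    have hz1 : (2:ℝ)⁻¹ ≤ 1 - z := by
      have := hz.2; norm_num at this ⊢; linarith
    have hz1' : 0 < 1 - z := lt_of_lt_of_le (by norm_num) hz1
    rw [Real.norm_eq_abs, Real.norm_eq_abs, abs_mul, abs_mul,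
      abs_of_pos (Real.rpow_pos_of_pos hz0 s), abs_of_pos (Real.rpow_pos_of_pos hz1' t),
      abs_of_pos (Real.rpow_pos_of_pos (by norm_num : (0:ℝ) < 2⁻¹) t)]
    rw [mul_comm]
    exact mul_le_mul_of_nonneg_right (Real.rpow_le_rpow_of_nonpos (by norm_num) hz1 ht0)
      (Real.rpow_pos_of_pos hz0 s).le
  have piece2 : IntegrableOn (fun z => z ^ s * (1 - z) ^ t) (Ioo (2:ℝ)⁻¹ 1) := by
    have hint : IntegrableOn (fun z : ℝ => ((2:ℝ)⁻¹ ^ s) * (1 - z) ^ t) (Ioo (2:ℝ)⁻¹ 1) := by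
      have h0 := (intervalIntegrable_rpow' (a := 0) (b := 2⁻¹) ht).comp_sub_left 1
      rw [show (1:ℝ) - 0 = 1 by norm_num, show (1:ℝ) - 2⁻¹ = 2⁻¹ by norm_num] at h0
      have h1 := h0.symm
      rw [intervalIntegrable_iff_integrableOn_Ioc_of_le (by norm_num)] at h1
      exact (h1.mono_set Ioo_subset_Ioc_self).const_mul _
    apply Integrable.mono hint (hcont _ (fun z hz => ⟨lt_trans (by norm_num) hz.1, hz.2⟩) measurableSet_Ioo)
    refine (ae_restrict_iff' measurableSet_Ioo).2 (ae_of_all _ ?_)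
    intro z hz
    have hz0 : (2:ℝ)⁻¹ ≤ z := hz.1.le
    have hz0' : 0 < z := lt_of_lt_of_le (by norm_num) hz0
    have hz1' : 0 < 1 - z := by linarith [hz.2]
    rw [Real.norm_eq_abs, Real.norm_eq_abs, abs_mul, abs_mul,
      abs_of_pos (Real.rpow_pos_of_pos hz0' s), abs_of_pos (Real.rpow_pos_of_pos hz1' t),
      abs_of_pos (Real.rpow_pos_of_pos (by norm_num : (0:ℝ) < 2⁻¹) s)]
    exact mul_le_mul_of_nonneg_right (Real.rpow_le_rpow_of_nonpos (by norm_num) hz0 hs0)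
      (Real.rpow_pos_of_pos hz1' t).le
  have hsub : Ioo (0:ℝ) 1 ⊆ Ioc (0:ℝ) 2⁻¹ ∪ Ioo (2:ℝ)⁻¹ 1 := by
    intro z hz
    rcases le_or_gt z 2⁻¹ with h | h
    · exact Or.inl ⟨hz.1, h⟩
    · exact Or.inr ⟨h, hz.2⟩
  exact (piece1.union piece2).mono_set hsub

lemma integrableOn_aux {s t : ℝ} (hs : -1 < s) (hs0 : s ≤ 0) (ht : -1 < t) (ht0 : t ≤ 0)
    {h : ℝ → ℝ} (hm : ContinuousOn h (Ioo (0:ℝ) 1)) {c : ℝ} (hc : 0 ≤ c)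
    (hb : ∀ z ∈ Ioo (0:ℝ) 1, |h z| ≤ c) :
    IntegrableOn (fun z => z ^ s * ((1 - z) ^ t * h z)) (Ioo (0:ℝ) 1) := by
  have hbeta := integrableOn_beta hs hs0 ht ht0
  have hmeas : AEStronglyMeasurable (fun z : ℝ => z ^ s * ((1 - z) ^ t * h z))
      (volume.restrict (Ioo (0:ℝ) 1)) := by
    apply ContinuousOn.aestronglyMeasurable _ measurableSet_Ioo
    apply ContinuousOn.mul
    · exact continuousOn_id.rpow_const fun x hx => Or.inl (ne_of_gt hx.1)
    · apply ContinuousOn.mul _ hm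
      exact (continuousOn_const.sub continuousOn_id).rpow_const
        fun x hx => Or.inl (by have := hx.2; intro hc; simp only [Pi.sub_apply, id] at hc; linarith)
  apply Integrable.mono (hbeta.const_mul c) hmeas
  refine (ae_restrict_iff' measurableSet_Ioo).2 (ae_of_all _ ?_)
  intro z hz
  have hz0 : 0 < z := hz.1
  have hz1 : 0 < 1 - z := by linarith [hz.2]
  have e1 : 0 < z ^ s := Real.rpow_pos_of_pos hz0 s
  have e2 : 0 < (1 - z) ^ t := Real.rpow_pos_of_pos hz1 t
  rw [Real.norm_eq_abs, Real.norm_eq_abs, abs_mul, abs_mul, abs_mul,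
    abs_of_pos e1, abs_of_pos e2, abs_of_nonneg hc,
    abs_of_pos (mul_pos e1 e2)]
  calc z ^ s * ((1 - z) ^ t * |h z|) ≤ z ^ s * ((1 - z) ^ t * c) := by
        apply mul_le_mul_of_nonneg_left (mul_le_mul_of_nonneg_left (hb z hz) e2.le) e1.le
    _ = c * (z ^ s * (1 - z) ^ t) := by ring

end HfunAux
namespace HfunAux

lemma pip_div (p : ℝ) (hp : 2 ≤ p) :
    pip p / (p - 1) ^ (1 / p)
      = (2 / p) * ∫ v in Ioo (0:ℝ) 1, v ^ (1/p - 1) * (1 - v) ^ (-(1/p)) := by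
  have hp0 : (0:ℝ) < p := by linarith
  have hp1 : (0:ℝ) < p - 1 := by linarith
  set K := (p - 1) ^ (1 / p) with hK
  have hKpos : 0 < K := Real.rpow_pos_of_pos hp1 _
  have hKp : K ^ p = p - 1 := by
    rw [hK, ← Real.rpow_mul hp1.le, one_div, inv_mul_cancel₀ hp0.ne', Real.rpow_one]
  have h1 : (∫ t in (0:ℝ)..K, (1 - t ^ p / (p-1)) ^ (-(1/p)))
      = K * ∫ x in (0:ℝ)..1, (1 - (K*x) ^ p / (p-1)) ^ (-(1/p)) := by
    have h := intervalIntegral.smul_integral_comp_mul_left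
      (f := fun t => (1 - t ^ p / (p-1)) ^ (-(1/p))) (a := (0:ℝ)) (b := 1) K
    simp only [smul_eq_mul, mul_zero, mul_one] at h
    rw [← h]
  have h2 : (∫ x in (0:ℝ)..1, (1 - (K*x) ^ p / (p-1)) ^ (-(1/p)))
      = ∫ x in (0:ℝ)..1, (1 - x ^ p) ^ (-(1/p)) := by
    apply intervalIntegral.integral_congr
    intro x hx
    rw [uIcc_of_le zero_le_one] at hx
    simp only
    congr 1
    rw [Real.mul_rpow hKpos.le hx.1, hKp, mul_div_assoc]
    rw [mul_div_cancel₀ _ hp1.ne']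
  have h3 : (∫ x in (0:ℝ)..1, (1 - x ^ p) ^ (-(1/p)))
      = (1/p) * ∫ v in Ioo (0:ℝ) 1, v ^ (1/p - 1) * (1 - v) ^ (-(1/p)) := by
    rw [intervalIntegral.integral_of_le zero_le_one, MeasureTheory.integral_Ioc_eq_integral_Ioo]
    rw [cov_rpow (1/p) (by positivity) (fun x => (1 - x ^ p) ^ (-(1/p)))]
    rw [← MeasureTheory.integral_const_mul]
    apply setIntegral_congr_fun measurableSet_Ioo
    intro u hu
    simp only
    have hu0 : 0 < u := hu.1
    have huu : (u ^ (1/p)) ^ p = u := by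
      rw [← Real.rpow_mul hu0.le, one_div, inv_mul_cancel₀ hp0.ne', Real.rpow_one]
    rw [huu, abs_of_pos (by positivity)]
    ring
  rw [pip, h1, h2, h3]
  field_simp

end HfunAux
namespace HfunAux

lemma main_zero (p : ℝ) (hp : 2 ≤ p) :
    Hfun 0 p (p/2)
      = (2 / p) * ∫ v in Ioo (0:ℝ) 1, v ^ (1/p - 1) * (1 - v) ^ (-(1/p)) := by
  have hp0 : (0:ℝ) < p := by linarith
  have hR : Rfun 0 p (p/2) = 1 := by
    rw [Rfun, Real.zero_rpow hp0.ne', Real.zero_rpow (by positivity : (0:ℝ) < p/2).ne']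
    norm_num
  rw [Hfun]
  have h2 : (∫ y in (0:ℝ)..1,
      (0:ℝ) * (1 - Rfun 0 p (p/2) * (1 + 0 ^ (p/2) * y ^ (p/2)) - 0 ^ p * y ^ p) ^ (-(1/p))) = 0 := by
    simp
  rw [h2, add_zero]
  rw [intervalIntegral.integral_of_le zero_le_one, MeasureTheory.integral_Ioc_eq_integral_Ioo]
  rw [setIntegral_congr_fun measurableSet_Ioo
    (g := fun y => (y ^ (p/2) * (1 - y ^ (p/2))) ^ (-(1/p))) ?_]
  · rw [cov_rpow (2/p) (by positivity) _]
    rw [← MeasureTheory.integral_const_mul]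
    apply setIntegral_congr_fun measurableSet_Ioo
    intro v hv
    simp only
    have hv0 : 0 < v := hv.1
    have hv1 : 0 < 1 - v := by linarith [hv.2]
    have hvv : (v ^ (2/p)) ^ (p/2) = v := by
      rw [← Real.rpow_mul hv0.le, show (2/p) * (p/2) = 1 by field_simp, Real.rpow_one]
    rw [hvv, abs_of_pos (by positivity)]
    apply eq_of_log_eq (by positivity) (by positivity)
    simp (disch := first | assumption | positivity) only [lmul, ldiv, linv, lrpow, Real.log_pow]
    ring
  · intro y hy
    simp only
    have hy0 : 0 < y := hy.1
    have hyp : y ^ p = y ^ (p/2) * y ^ (p/2) := by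
      rw [← Real.rpow_add hy0]; congr 1; ring
    rw [hR, hyp]
    congr 1
    ring

end HfunAux
namespace HfunAux

lemma main_pos (p : ℝ) (hp : 2 ≤ p) (m : ℝ) (h0 : 0 < m) (hm1 : m ≤ 1) :
    Hfun m p (p/2)
      = (2 / p) * ∫ v in Ioo (0:ℝ) 1, v ^ (1/p - 1) * (1 - v) ^ (-(1/p)) := by
  have hp0 : (0:ℝ) < p := by linarith
  set a := m ^ (p/2) with ha_def
  have ha : 0 < a := Real.rpow_pos_of_pos h0 _
  have ha1 : a ≤ 1 := Real.rpow_le_one h0.le hm1 (by positivity)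
  have hA : (0:ℝ) < 1 + a := by linarith
  have hma : a ^ (2/p) = m := by
    rw [ha_def, ← Real.rpow_mul h0.le, show (p/2) * (2/p) = 1 by field_simp, Real.rpow_one]
  have hmp : m ^ p = a * a := by
    rw [show p = p/2 + p/2 by ring, Real.rpow_add h0, ← ha_def]
  have hR : Rfun m p (p/2) = 1 - a := by
    rw [Rfun, hmp, ← ha_def, div_eq_iff hA.ne']
    ring
  -- first integral
  have hE1 : (∫ y in Ioo (0:ℝ) 1, (1 - Rfun m p (p/2) * (1 - y ^ (p/2)) - y ^ p) ^ (-(1/p)))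
      = (2/p * (2 ^ (2/p) * (a ^ (1/p) * (1+a) ^ (1 - 2/p)))) * ∫ z in Ioo (0:ℝ) 1,
          z ^ (2/p - 1) * ((1 - z) ^ (-(1/p)) *
            ((1 + z) ^ (-(1/p)) * ((1+a) + (2*a - (1+a)) * z)⁻¹)) := by
    rw [setIntegral_congr_fun measurableSet_Ioo
      (g := fun y => ((1 - y ^ (p/2)) * (y ^ (p/2) + a)) ^ (-(1/p))) ?_]
    · rw [cov_rpow (2/p) (by positivity) _]
      rw [setIntegral_congr_fun measurableSet_Ioo
        (g := fun v => 2/p * (v ^ (2/p - 1) * ((1 - v) * (v + a)) ^ (-(1/p)))) ?_]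
      · rw [cov_mobius (2*a) (1+a) hA (by positivity) _]
        rw [← MeasureTheory.integral_const_mul]
        apply setIntegral_congr_fun measurableSet_Ioo
        intro z hz
        simp only
        have hz0 : 0 < z := hz.1
        have hz1 : 0 < 1 - z := by linarith [hz.2]
        have hz2 : 0 < 1 + z := by linarith
        have hd : 0 < (1+a) + (2*a - (1+a)) * z := by nlinarith [hz.2]
        have hd' : ((1:ℝ)+a) + (2*a - (1+a)) * z ≠ 0 := hd.ne'
        have hM1 : 1 - 2*a*z/((1+a) + (2*a - (1+a)) * z)
            = (1+a)*(1-z)/((1+a) + (2*a - (1+a)) * z) := by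
          rw [eq_div_iff hd', sub_mul, div_mul_cancel₀ _ hd']
          ring
        have hM2 : 2*a*z/((1+a) + (2*a - (1+a)) * z) + a
            = a*((1+a)*(1+z))/((1+a) + (2*a - (1+a)) * z) := by
          rw [eq_div_iff hd', add_mul, div_mul_cancel₀ _ hd']
          ring
        rw [hM1, hM2, abs_of_pos (by positivity)]
        apply eq_of_log_eq (by positivity) (by positivity)
        simp (disch := first | assumption | positivity) only
          [lmul, ldiv, linv, lrpow, Real.log_pow]
        push_cast
        ring
      · intro v hv
        simp only
        have hv0 : 0 < v := hv.1
        have hvv : (v ^ (2/p)) ^ (p/2) = v := by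
          rw [← Real.rpow_mul hv0.le, show (2/p) * (p/2) = 1 by field_simp, Real.rpow_one]
        rw [hvv, abs_of_pos (by positivity)]
        ring
    · intro y hy
      simp only
      have hy0 : 0 < y := hy.1
      have hyp : y ^ p = y ^ (p/2) * y ^ (p/2) := by
        rw [← Real.rpow_add hy0]; congr 1; ring
      rw [hR, hyp]
      congr 1
      ring
  -- second integral
  have hE2 : (∫ y in Ioo (0:ℝ) 1,
        m * (1 - Rfun m p (p/2) * (1 + m ^ (p/2) * y ^ (p/2)) - m ^ p * y ^ p) ^ (-(1/p)))
      = (2/p * (2 ^ (2/p) * (a ^ (1/p) * (1+a) ^ (1 - 2/p)))) * ∫ z in Ioo (0:ℝ) 1,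
          z ^ (2/p - 1) * ((1 - z) ^ (-(1/p)) *
            ((1 + z) ^ (-(1/p)) * ((1+a) + (2 - (1+a)) * z)⁻¹)) := by
    rw [setIntegral_congr_fun measurableSet_Ioo
      (g := fun y => a ^ (1/p) * ((1 - y ^ (p/2)) * (1 + a * y ^ (p/2))) ^ (-(1/p))) ?_]
    · rw [cov_rpow (2/p) (by positivity) _]
      rw [setIntegral_congr_fun measurableSet_Ioo
        (g := fun v => 2/p * (a ^ (1/p) * (v ^ (2/p - 1) * ((1 - v) * (1 + a*v)) ^ (-(1/p))))) ?_]
      · rw [cov_mobius 2 (1+a) hA (by positivity) _]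
        rw [← MeasureTheory.integral_const_mul]
        apply setIntegral_congr_fun measurableSet_Ioo
        intro z hz
        simp only
        have hz0 : 0 < z := hz.1
        have hz1 : 0 < 1 - z := by linarith [hz.2]
        have hz2 : 0 < 1 + z := by linarith
        have hd : 0 < (1+a) + (2 - (1+a)) * z := by nlinarith [hz.1, ha1]
        have hd' : ((1:ℝ)+a) + (2 - (1+a)) * z ≠ 0 := hd.ne'
        have hN1 : 1 - 2*z/((1+a) + (2 - (1+a)) * z)
            = (1+a)*(1-z)/((1+a) + (2 - (1+a)) * z) := by
          rw [eq_div_iff hd', sub_mul, div_mul_cancel₀ _ hd']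
          ring
        have hN2 : 1 + a * (2*z/((1+a) + (2 - (1+a)) * z))
            = (1+a)*(1+z)/((1+a) + (2 - (1+a)) * z) := by
          rw [mul_div_assoc', eq_div_iff hd', add_mul, div_mul_cancel₀ _ hd']
          ring
        rw [hN1, hN2, abs_of_pos (by positivity)]
        apply eq_of_log_eq (by positivity) (by positivity)
        simp (disch := first | assumption | positivity) only
          [lmul, ldiv, linv, lrpow, Real.log_pow]
        push_cast
        ring
      · intro v hv
        simp only
        have hv0 : 0 < v := hv.1
        have hvv : (v ^ (2/p)) ^ (p/2) = v := by
          rw [← Real.rpow_mul hv0.le, show (2/p) * (p/2) = 1 by field_simp, Real.rpow_one]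
        rw [hvv, abs_of_pos (by positivity)]
        ring
    · intro y hy
      simp only
      have hy0 : 0 < y := hy.1
      have hy1 : 0 < 1 - y ^ (p/2) :=
        sub_pos.2 (Real.rpow_lt_one hy.1.le hy.2 (by positivity))
      have hy2 : 0 < 1 + a * y ^ (p/2) := by positivity
      have hyp : y ^ p = y ^ (p/2) * y ^ (p/2) := by
        rw [← Real.rpow_add hy0]; congr 1; ring
      rw [hR, hyp, hmp,
        show 1 - (1 - a) * (1 + a * y ^ (p/2)) - a * a * (y ^ (p/2) * y ^ (p/2))
          = a * ((1 - y ^ (p/2)) * (1 + a * y ^ (p/2))) by ring,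
        ← hma]
      apply eq_of_log_eq (by positivity) (by positivity)
      simp (disch := first | assumption | positivity) only
        [lmul, ldiv, linv, lrpow, Real.log_pow]
      ring
  -- exponent facts
  have hexp1 : (-1:ℝ) < 2/p - 1 := by
    have : 0 < 2/p := by positivity
    linarith
  have hexp2 : (2:ℝ)/p - 1 ≤ 0 := by
    have : 2/p ≤ 1 := by rw [div_le_one hp0]; linarith
    linarith
  have hexp3 : (-1:ℝ) < -(1/p) := by
    have : 1/p < 1 := by rw [div_lt_one hp0]; linarith
    linarith
  have hexp4 : -(1/p) ≤ 0 := neg_nonpos.2 (by positivity)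
  -- integrability of the two transformed integrands
  have hInt : ∀ b : ℝ, (∀ z : ℝ, 0 ≤ z → z ≤ 1 → 2*a ≤ (1+a) + (b - (1+a)) * z) →
      IntegrableOn (fun z => z ^ (2/p - 1) * ((1 - z) ^ (-(1/p)) *
        ((1 + z) ^ (-(1/p)) * ((1+a) + (b - (1+a)) * z)⁻¹))) (Ioo (0:ℝ) 1) := by
    intro b hb
    apply integrableOn_aux hexp1 hexp2 hexp3 hexp4 ?_ (by positivity : (0:ℝ) ≤ (2*a)⁻¹) ?_
    · apply ContinuousOn.mul
      · apply ContinuousOn.rpow_const (by fun_prop)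
        intro x hx
        exact Or.inl (by have := hx.1; intro hc; linarith)
      · apply ContinuousOn.inv₀ (by fun_prop)
        intro x hx
        exact (lt_of_lt_of_le (by positivity) (hb x hx.1.le hx.2.le)).ne'
    · intro z hz
      have hdz : 0 < (1+a) + (b - (1+a)) * z :=
        lt_of_lt_of_le (by positivity) (hb z hz.1.le hz.2.le)
      rw [abs_mul, abs_of_pos (Real.rpow_pos_of_pos (by linarith [hz.1] : (0:ℝ) < 1 + z) _),
        abs_of_pos (inv_pos.2 hdz)]
      calc (1 + z) ^ (-(1/p)) * ((1+a) + (b - (1+a)) * z)⁻¹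
          ≤ 1 * (2*a)⁻¹ := by
            apply mul_le_mul
            · exact Real.rpow_le_one_of_one_le_of_nonpos (by linarith [hz.1]) hexp4
            · exact inv_anti₀ (by positivity) (hb z hz.1.le hz.2.le)
            · positivity
            · norm_num
        _ = (2*a)⁻¹ := one_mul _
  have hInt1 := hInt (2*a) (by intro z h0' h1'; nlinarith)
  have hInt2 := hInt 2 (by intro z h0' h1'; nlinarith)
  -- combine the two integrals
  have hH : Hfun m p (p/2)
      = (∫ y in Ioo (0:ℝ) 1, (1 - Rfun m p (p/2) * (1 - y ^ (p/2)) - y ^ p) ^ (-(1/p)))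
        + ∫ y in Ioo (0:ℝ) 1,
            m * (1 - Rfun m p (p/2) * (1 + m ^ (p/2) * y ^ (p/2)) - m ^ p * y ^ p) ^ (-(1/p)) := by
    rw [Hfun, intervalIntegral.integral_of_le zero_le_one,
      intervalIntegral.integral_of_le zero_le_one,
      MeasureTheory.integral_Ioc_eq_integral_Ioo, MeasureTheory.integral_Ioc_eq_integral_Ioo]
  rw [hH, hE1, hE2, ← mul_add, ← MeasureTheory.integral_add hInt1 hInt2]
  -- substitution z = u^(1/2)
  rw [cov_rpow (1/2) (by norm_num) _]
  rw [setIntegral_congr_fun measurableSet_Ioo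
    (g := fun u => (1+a)⁻¹ * (u ^ (1/p - 1) * ((1 - u) ^ (-(1/p)) *
      (1 - ((1-a)*(1-a))/((1+a)*(1+a)) * u)⁻¹))) ?_]
  · rw [MeasureTheory.integral_const_mul]
    have hL0 : (0:ℝ) ≤ ((1-a)*(1-a))/((1+a)*(1+a)) :=
      div_nonneg (mul_self_nonneg _) (by positivity)
    have h1L : (0:ℝ) < 1 - ((1-a)*(1-a))/((1+a)*(1+a)) := by
      rw [sub_pos, div_lt_one (by positivity)]
      nlinarith
    -- substitution removing the (1 - L u)⁻¹ factor
    rw [cov_mobius 1 (1 - ((1-a)*(1-a))/((1+a)*(1+a))) h1L one_pos _]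
    rw [setIntegral_congr_fun measurableSet_Ioo
      (g := fun v => (1 - ((1-a)*(1-a))/((1+a)*(1+a))) ^ (-(1/p)) *
        (v ^ (1/p - 1) * (1 - v) ^ (-(1/p)))) ?_]
    · rw [MeasureTheory.integral_const_mul]
      have hconst : (2/p * (2 ^ (2/p) * (a ^ (1/p) * (1+a) ^ (1 - 2/p)))) *
          ((1+a)⁻¹ * (1 - ((1-a)*(1-a))/((1+a)*(1+a))) ^ (-(1/p))) = 2/p := by
        rw [show (1:ℝ) - ((1-a)*(1-a))/((1+a)*(1+a)) = 2*2*a/((1+a)*(1+a)) by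
          field_simp; ring]
        apply eq_of_log_eq (by positivity) (by positivity)
        simp (disch := first | assumption | positivity) only
          [lmul, ldiv, linv, lrpow, Real.log_pow, Real.log_one]
        ring
      linear_combination (∫ v in Ioo (0:ℝ) 1, v ^ (1/p - 1) * (1 - v) ^ (-(1/p))) * hconst
    · -- pointwise identity for the last Möbius substitution
      intro v hv
      simp only
      set L : ℝ := ((1-a)*(1-a))/((1+a)*(1+a)) with hLdef
      set D : ℝ := (1 - L) + (1 - (1 - L)) * v with hDdef
      have hv0 : 0 < v := hv.1
      have hv1 : 0 < 1 - v := by linarith [hv.2]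
      have hdv : 0 < D := by
        rw [hDdef]
        nlinarith [mul_nonneg hL0 hv.1.le]
      have hP1 : 1 - 1*v/D = ((1 - L) * (1-v)) / D := by
        rw [eq_div_iff hdv.ne', sub_mul, one_mul, div_mul_cancel₀ _ hdv.ne', hDdef]
        ring
      have hP2 : 1 - L * (1*v/D) = (1 - L) / D := by
        rw [eq_div_iff hdv.ne']
        simp only [one_mul, sub_mul]
        rw [mul_assoc, div_mul_cancel₀ _ hdv.ne', hDdef]
        ring
      rw [hP1, hP2, abs_of_pos (by positivity)]
      apply eq_of_log_eq (by positivity) (by positivity)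
      simp (disch := first | assumption | positivity) only
        [lmul, ldiv, linv, lrpow, Real.log_pow, Real.log_one, one_mul, mul_one]
      ring
  · -- pointwise identity for the substitution z = u^(1/2)
    intro u hu
    simp only
    have hu0 : 0 < u := hu.1
    have hu1 : 0 < 1 - u := by linarith [hu.2]
    have hs0 : 0 < u ^ ((1:ℝ)/2) := Real.rpow_pos_of_pos hu0 _
    have hs1 : u ^ ((1:ℝ)/2) < 1 := Real.rpow_lt_one hu0.le hu.2 (by norm_num)
    have hs1' : 0 < 1 - u ^ ((1:ℝ)/2) := by linarith
    have hs2 : 0 < 1 + u ^ ((1:ℝ)/2) := by linarith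
    have huu : u ^ ((1:ℝ)/2) * u ^ ((1:ℝ)/2) = u := by
      rw [← Real.rpow_add hu0]
      norm_num
    have hd1 : 0 < (1+a) + (2*a - (1+a)) * u ^ ((1:ℝ)/2) := by
      nlinarith [mul_pos ha hs0, mul_pos hA (sub_pos.2 hs1)]
    have hd2 : 0 < (1+a) + (2 - (1+a)) * u ^ ((1:ℝ)/2) := by
      nlinarith [mul_pos ha hs0, mul_pos hA (sub_pos.2 hs1)]
    have hQ : 0 < 1 - ((1-a)*(1-a))/((1+a)*(1+a)) * u := by
      have h1 : ((1-a)*(1-a))/((1+a)*(1+a)) < 1 := by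
        rw [div_lt_one (by positivity)]
        nlinarith
      nlinarith [mul_nonneg (div_nonneg (by nlinarith : (0:ℝ) ≤ (1-a)*(1-a))
        (by positivity : (0:ℝ) ≤ (1+a)*(1+a))) hu0.le, hu.2]
    have hQfac : ((1+a)*(1+a)) * (1 - ((1-a)*(1-a))/((1+a)*(1+a)) * u)
        = (1+a)*(1+a) - (1-a)*(1-a)*u := by
      field_simp
    have hprod : ((1+a) + (2*a - (1+a)) * u ^ ((1:ℝ)/2)) *
          ((1+a) + (2 - (1+a)) * u ^ ((1:ℝ)/2))
        = (1+a)*(1+a) - (1-a)*(1-a)*u := by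
      linear_combination (-((1-a)*(1-a))) * huu
    have key : ((1+a) + (2*a - (1+a)) * u ^ ((1:ℝ)/2))⁻¹ +
          ((1+a) + (2 - (1+a)) * u ^ ((1:ℝ)/2))⁻¹
        = (2*(1+a)) * (((1+a)*(1+a)) * (1 - ((1-a)*(1-a))/((1+a)*(1+a)) * u))⁻¹ := by
      rw [hQfac, inv_add_inv hd1.ne' hd2.ne', hprod,
        show ((1+a) + (2*a - (1+a)) * u ^ ((1:ℝ)/2)) + ((1+a) + (2 - (1+a)) * u ^ ((1:ℝ)/2))
          = 2*(1+a) by ring, div_eq_mul_inv]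
    have hfact : (u ^ ((1:ℝ)/2)) ^ (2/p - 1) * ((1 - u ^ ((1:ℝ)/2)) ^ (-(1/p)) *
          ((1 + u ^ ((1:ℝ)/2)) ^ (-(1/p)) * ((1+a) + (2*a - (1+a)) * u ^ ((1:ℝ)/2))⁻¹))
        + (u ^ ((1:ℝ)/2)) ^ (2/p - 1) * ((1 - u ^ ((1:ℝ)/2)) ^ (-(1/p)) *
          ((1 + u ^ ((1:ℝ)/2)) ^ (-(1/p)) * ((1+a) + (2 - (1+a)) * u ^ ((1:ℝ)/2))⁻¹))
        = (u ^ ((1:ℝ)/2)) ^ (2/p - 1) * ((1 - u ^ ((1:ℝ)/2)) ^ (-(1/p)) *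
          ((1 + u ^ ((1:ℝ)/2)) ^ (-(1/p)) *
            (((1+a) + (2*a - (1+a)) * u ^ ((1:ℝ)/2))⁻¹ +
             ((1+a) + (2 - (1+a)) * u ^ ((1:ℝ)/2))⁻¹))) := by
      ring
    rw [hfact, key, abs_of_pos (by positivity : (0:ℝ) < 1/2 * u ^ ((1:ℝ)/2 - 1)),
      show (1:ℝ) - u = (1 - u ^ ((1:ℝ)/2)) * (1 + u ^ ((1:ℝ)/2)) by linear_combination huu]
    apply eq_of_log_eq (by positivity) (by positivity)
    simp (disch := first | assumption | positivity) only
      [lmul, ldiv, linv, lrpow, Real.log_pow, Real.log_one, one_mul, mul_one]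
    ring

end HfunAux

/-- `m ↦ H(m,p,p/2)` is the constant `π_p/(p-1)^{1/p}` on `[0,1]`. -/
theorem Hfun_const_at_half (p : ℝ) (hp : 2 ≤ p) :
    ∀ m ∈ Icc (0 : ℝ) 1, Hfun m p (p / 2) = pip p / (p - 1) ^ (1 / p) := by
  intro m hm
  rw [HfunAux.pip_div p hp]
  rcases eq_or_lt_of_le hm.1 with h0 | h0
  · rw [← h0]
    exact HfunAux.main_zero p hp
  · exact HfunAux.main_pos p hp m h0 hm.2
end
end

section
/- Let p ≥ 2 and m ∈ (0,1). With A(m,y) = m^{p/2} + (1 − m^{p/2}) y^{p/2} − y^p and B(m,y) = m^{p/2} − (1 − m^{p/2}) m^{p/2} y^{p/2} − m^p y^p for y ∈ [0,1], one has the integral identity ∫_0^1 (1 − y^{p/2}) A(m,y)^{−(p+1)/p} dy = ∫_0^1 m (1 − y^{p/2}) B(m,y)^{−(p+1)/p} dy. -/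
open Set MeasureTheory intervalIntegral Real

noncomputable section

def phi (p m y : ℝ) : ℝ := y * (m ^ (p/2) + (1 - m ^ (p/2)) * y ^ (p/2)) ^ (-(2/p))
def phi' (p m y : ℝ) : ℝ :=
  m ^ (p/2) * (m ^ (p/2) + (1 - m ^ (p/2)) * y ^ (p/2)) ^ (-(2/p) - 1)

lemma phi_hasDeriv {p m : ℝ} (hp : 2 ≤ p) (hm0 : 0 < m) (hm1 : m < 1) {y : ℝ} (hy : 0 < y) :
    HasDerivAt (phi p m) (phi' p m y) y := by
  have hp0 : (0:ℝ) < p := by linarith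
  set c := m ^ (p/2) with hc
  have hc0 : 0 < c := rpow_pos_of_pos hm0 _
  have hc1 : c < 1 := rpow_lt_one hm0.le hm1 (by positivity)
  have hs0 : (0:ℝ) ≤ y ^ (p/2) := rpow_nonneg hy.le _
  have hw0 : 0 < c + (1-c) * y ^ (p/2) := by nlinarith
  have hw : HasDerivAt (fun x : ℝ => c + (1-c) * x ^ (p/2)) ((1-c) * ((p/2) * y ^ (p/2-1))) y := by
    have h := (Real.hasDerivAt_rpow_const (x := y) (p := p/2) (Or.inl hy.ne')).const_mul (1-c)
    simpa using h.const_add c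
  have h2 : HasDerivAt (fun x : ℝ => (c + (1-c) * x ^ (p/2)) ^ (-(2/p)))
      ((-(2/p)) * (c + (1-c) * y ^ (p/2)) ^ (-(2/p) - 1) * ((1-c) * ((p/2) * y ^ (p/2-1)))) y := by
    have h := (Real.hasDerivAt_rpow_const (x := c + (1-c) * y ^ (p/2)) (p := -(2/p))
      (Or.inl hw0.ne')).comp y hw
    exact h
  have h3 := (hasDerivAt_id y).mul h2
  simp only [id, one_mul] at h3
  refine h3.congr_deriv ?_
  symm
  have e1 : y * y ^ (p/2 - 1) = y ^ (p/2) := by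
    have h := Real.rpow_add hy 1 (p/2 - 1)
    rw [Real.rpow_one, show (1:ℝ) + (p/2 - 1) = p/2 by ring] at h
    exact h.symm
  have e2 : (c + (1-c) * y ^ (p/2)) ^ (-(2/p))
      = (c + (1-c) * y ^ (p/2)) * (c + (1-c) * y ^ (p/2)) ^ (-(2/p) - 1) := by
    have h := Real.rpow_add hw0 1 (-(2/p) - 1)
    rw [Real.rpow_one, show (1:ℝ) + (-(2/p) - 1) = -(2/p) by ring] at h
    exact h
  rw [phi', ← hc, e2, ← e1]
  generalize (c + (1-c) * y ^ (p/2)) ^ (-(2/p) - 1) = W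
  generalize y ^ (p/2 - 1) = u
  field_simp
  ring

lemma pointwise {p m : ℝ} (hp : 2 ≤ p) (hm0 : 0 < m) (hm1 : m < 1) {y : ℝ}
    (hy0 : 0 < y) (hy1 : y < 1) :
    |phi' p m y| * (m * (1 - (phi p m y) ^ (p / 2)) *
      (m ^ (p / 2) - (1 - m ^ (p / 2)) * m ^ (p / 2) * (phi p m y) ^ (p / 2)
        - m ^ p * (phi p m y) ^ p) ^ (-((p + 1) / p)))
    = (1 - y ^ (p / 2)) *
        (m ^ (p / 2) + (1 - m ^ (p / 2)) * y ^ (p / 2) - y ^ p) ^ (-((p + 1) / p)) := by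
  have hp0 : (0:ℝ) < p := by linarith
  set c := m ^ (p/2) with hc
  have hc0 : 0 < c := rpow_pos_of_pos hm0 _
  have hc1 : c < 1 := rpow_lt_one hm0.le hm1 (by positivity)
  set s := y ^ (p/2) with hs
  have hs0 : 0 < s := rpow_pos_of_pos hy0 _
  have hs1 : s < 1 := rpow_lt_one hy0.le hy1 (by positivity)
  set w := c + (1-c) * s with hw
  have hw0 : 0 < w := by nlinarith
  set t := phi p m y with htdef
  have ht0 : 0 < t := mul_pos hy0 (rpow_pos_of_pos hw0 _)
  have hpp : p = p/2 + p/2 := by ring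
  have hyp : y ^ p = s * s := by
    conv_lhs => rw [hpp]
    rw [Real.rpow_add hy0]
  have hmp : m ^ p = c * c := by
    conv_lhs => rw [hpp]
    rw [Real.rpow_add hm0]
  have htq : t ^ (p/2) = s / w := by
    rw [htdef, phi, Real.mul_rpow hy0.le (rpow_nonneg hw0.le _), ← Real.rpow_mul hw0.le,
      show -(2/p) * (p/2) = -1 by field_simp, Real.rpow_neg_one]
    exact (div_eq_mul_inv s w).symm
  have htp : t ^ p = (s/w) * (s/w) := by
    conv_lhs => rw [hpp]
    rw [Real.rpow_add ht0, htq]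
  have hphi' : |phi' p m y| = c * w ^ (-(2/p) - 1) := by
    rw [phi', ← hs, ← hc, ← hw]
    exact abs_of_pos (by positivity)
  set E := -((p+1)/p) with hE
  have hA0 : 0 < (1-s) * (s+c) := by nlinarith
  have hBeq : c - (1-c) * c * (s/w) - c * c * ((s/w) * (s/w))
      = (c*c) * ((1-s)*(s+c)) / (w*w) := by
    field_simp
    ring
  have h1s : 1 - s/w = c * (1-s) / w := by
    field_simp
    ring
  rw [hphi', hmp, htq, htp, hyp, hBeq, h1s,
    show c + (1-c) * s - s * s = (1-s)*(s+c) by ring,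
    Real.div_rpow (by positivity) (by positivity),
    Real.mul_rpow (by positivity : (0:ℝ) ≤ c*c) hA0.le]
  -- constants
  have k1 : m * (c*c) ^ E * c * c = 1 := by
    have hcc : (c*c) ^ E = m ^ (p * E) := by
      rw [hc, ← Real.rpow_add hm0, show p/2 + p/2 = p by ring, ← Real.rpow_mul hm0.le]
    have hex : (1:ℝ) + p * E + p/2 + p/2 = 0 := by
      rw [hE]; field_simp; ring
    rw [hcc, hc, show m * m ^ (p*E) * m ^ (p/2) * m ^ (p/2)
        = m ^ (1:ℝ) * m ^ (p*E) * m ^ (p/2) * m ^ (p/2) by rw [Real.rpow_one],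
      ← Real.rpow_add hm0, ← Real.rpow_add hm0, ← Real.rpow_add hm0, hex, Real.rpow_zero]
  have k2 : w ^ (-(2/p) - 1) = w * (w*w) ^ E := by
    have hww : (w*w) ^ E = w ^ (E + E) := by
      rw [Real.mul_rpow hw0.le hw0.le, ← Real.rpow_add hw0]
    rw [hww, show w * w ^ (E+E) = w ^ (1:ℝ) * w ^ (E+E) by rw [Real.rpow_one],
      ← Real.rpow_add hw0]
    congr 1
    rw [hE]; field_simp; ring
  rw [k2]
  have hP2 : (0:ℝ) < (w*w) ^ E := rpow_pos_of_pos (by positivity) _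
  field_simp
  rw [sq]
  linear_combination (1-s) * k1

/-- the integral identity between `A` and `B`. -/
theorem AB_integral_identity (p m : ℝ) (hp : 2 ≤ p) (hm : m ∈ Ioo (0 : ℝ) 1) :
    (∫ y in (0 : ℝ)..1, (1 - y ^ (p / 2)) *
        (m ^ (p / 2) + (1 - m ^ (p / 2)) * y ^ (p / 2) - y ^ p) ^ (-((p + 1) / p)))
    = ∫ y in (0 : ℝ)..1, m * (1 - y ^ (p / 2)) *
        (m ^ (p / 2) - (1 - m ^ (p / 2)) * m ^ (p / 2) * y ^ (p / 2) - m ^ p * y ^ p)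
          ^ (-((p + 1) / p)) := by
  obtain ⟨hm0, hm1⟩ := hm
  have hp0 : (0:ℝ) < p := by linarith
  have hc0 : 0 < m ^ (p/2) := rpow_pos_of_pos hm0 _
  have hc1 : m ^ (p/2) < 1 := rpow_lt_one hm0.le hm1 (by positivity)
  have hwpos : ∀ y : ℝ, 0 ≤ y → 0 < m ^ (p/2) + (1 - m ^ (p/2)) * y ^ (p/2) := by
    intro y hy
    have := rpow_nonneg hy (p/2)
    nlinarith
  have hcont : ContinuousOn (phi p m) (Icc 0 1) := by
    have h1 : Continuous fun y : ℝ => m ^ (p/2) + (1 - m ^ (p/2)) * y ^ (p/2) := by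
      apply continuous_const.add
      apply continuous_const.mul
      rw [continuous_iff_continuousAt]
      intro x
      exact Real.continuousAt_rpow_const x (p/2) (Or.inr (by positivity))
    apply continuousOn_id.mul
    apply ContinuousOn.rpow_const h1.continuousOn
    intro x hx
    exact Or.inl (hwpos x hx.1).ne'
  have hmono : StrictMonoOn (phi p m) (Icc 0 1) := by
    apply strictMonoOn_of_deriv_pos (convex_Icc 0 1) hcont
    intro x hx
    rw [interior_Icc] at hx
    rw [(phi_hasDeriv hp hm0 hm1 hx.1).deriv]
    rw [phi']
    exact mul_pos hc0 (rpow_pos_of_pos (hwpos x hx.1.le) _)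
  have h0 : phi p m 0 = 0 := by simp [phi]
  have h1 : phi p m 1 = 1 := by
    rw [phi, Real.one_rpow, show m ^ (p/2) + (1 - m ^ (p/2)) * 1 = 1 by ring,
      Real.one_rpow, one_mul]
  have himg : phi p m '' Ioo 0 1 = Ioo 0 1 := by
    apply Subset.antisymm
    · rintro _ ⟨x, hx, rfl⟩
      constructor
      · have := hmono (left_mem_Icc.2 zero_le_one) (Ioo_subset_Icc_self hx) hx.1
        rwa [h0] at this
      · have := hmono (Ioo_subset_Icc_self hx) (right_mem_Icc.2 zero_le_one) hx.2
        rwa [h1] at this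
    · have h := intermediate_value_Ioo (zero_le_one (α := ℝ)) hcont
      rwa [h0, h1] at h
  have hderiv : ∀ x ∈ Ioo (0:ℝ) 1,
      HasDerivWithinAt (phi p m) (phi' p m x) (Ioo 0 1) x :=
    fun x hx => (phi_hasDeriv hp hm0 hm1 hx.1).hasDerivWithinAt
  have hinj : InjOn (phi p m) (Ioo 0 1) := hmono.injOn.mono Ioo_subset_Icc_self
  have key := integral_image_eq_integral_abs_deriv_smul measurableSet_Ioo hderiv hinj
    (fun y => m * (1 - y ^ (p / 2)) *
        (m ^ (p / 2) - (1 - m ^ (p / 2)) * m ^ (p / 2) * y ^ (p / 2) - m ^ p * y ^ p)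
          ^ (-((p + 1) / p)))
  rw [himg] at key
  rw [intervalIntegral.integral_of_le zero_le_one, intervalIntegral.integral_of_le zero_le_one,
    integral_Ioc_eq_integral_Ioo, integral_Ioc_eq_integral_Ioo, key]
  apply setIntegral_congr_fun measurableSet_Ioo
  intro y hy
  dsimp only
  rw [smul_eq_mul]
  exact (pointwise hp hm0 hm1 hy.1 hy.2).symm
end
end
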